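/- arXiv:1905.10867 — 2 statements merged into one kernel-verified Lean document; each statement's English description precedes it below -/
import Mathlib

section
/- Let x be a node of a one-sided tree decomposition of the incidence graph of CNF φ with children y₁, y₂, let Φ be a principal CNF of x (the restriction of φ to variables of T_x after removing a set CL' ⊆ CL(x) of clauses and restricting by an assignment S to Var(par(x)) ∩ Var(x)), and let S' be an assignment to Var(x) \ Var(par(x)). If Φ|_{S'} is unsatisfiable, then either Φ|_{S'} contains the empty clause, or for some child y of x the y-component of Φ through S' is unsatisfiable. -/
def postorder {α : Type} : Tree α → List α
  | BinaryTree.nil => []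
  | BinaryTree.node a l r => postorder l ++ postorder r ++ [a]

inductive IsSubtree {α : Type} : Tree α → Tree α → Prop
  | refl (t : Tree α) : IsSubtree t t
  | left {s l r : Tree α} {a : α} : IsSubtree s l → IsSubtree s (Tree.node a l r)
  | right {s l r : Tree α} {a : α} : IsSubtree s r → IsSubtree s (Tree.node a l r)

abbrev Lit : Type := ℕ × Bool
abbrev Clause : Type := Finset Lit
abbrev CNF : Type := Finset Clause

def satClause (a : ℕ → Bool) (C : Clause) : Prop := ∃ l ∈ C, a l.1 = l.2
def satCNF (a : ℕ → Bool) (φ : CNF) : Prop := ∀ C ∈ φ, satClause a C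
def UnsatCNF (φ : CNF) : Prop := ¬ ∃ a : ℕ → Bool, satCNF a φ
def varsC (C : Clause) : Finset ℕ := C.image Prod.fst
def varsCNF (φ : CNF) : Finset ℕ := φ.biUnion varsC
def WellFormed (S : Finset Lit) : Prop := ∀ x : ℕ, ¬((x, true) ∈ S ∧ (x, false) ∈ S)
def negLits (S : Finset Lit) : Finset Lit := S.image (fun l => (l.1, !l.2))
def restrictCNF (φ : CNF) (S : Finset Lit) : CNF :=
  (φ.filter (fun C => C ∩ S = ∅)).image (fun C => C \ negLits S)

abbrev IBag : Type := Finset ℕ × Finset Clause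

def rootIB : Tree IBag → IBag
  | BinaryTree.nil => (∅, ∅)
  | BinaryTree.node B _ _ => B

def occursVI (x : ℕ) (t : Tree IBag) : Prop := ∃ B ∈ postorder t, x ∈ B.1
def occursCI (C : Clause) (t : Tree IBag) : Prop := ∃ B ∈ postorder t, C ∈ B.2

def ConnInV (x : ℕ) : Tree IBag → Prop
  | BinaryTree.nil => True
  | BinaryTree.node B l r => ConnInV x l ∧ ConnInV x r ∧ (occursVI x l → occursVI x r → x ∈ B.1) ∧
      (x ∈ B.1 → occursVI x l → x ∈ (rootIB l).1) ∧ (x ∈ B.1 → occursVI x r → x ∈ (rootIB r).1)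

def ConnInC (C : Clause) : Tree IBag → Prop
  | BinaryTree.nil => True
  | BinaryTree.node B l r => ConnInC C l ∧ ConnInC C r ∧ (occursCI C l → occursCI C r → C ∈ B.2) ∧
      (C ∈ B.2 → occursCI C l → C ∈ (rootIB l).2) ∧ (C ∈ B.2 → occursCI C r → C ∈ (rootIB r).2)

/-- The bags containing clause `C` form a directed (root-to-descendant) path. -/
def ChainC (C : Clause) : Tree IBag → Prop
  | BinaryTree.nil => True
  | BinaryTree.node B l r => ¬(occursCI C l ∧ occursCI C r) ∧
      (C ∈ B.2 → (occursCI C l → C ∈ (rootIB l).2) ∧ (occursCI C r → C ∈ (rootIB r).2)) ∧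
      ChainC C l ∧ ChainC C r

def IsIncDecomp (φ : CNF) (t : Tree IBag) : Prop :=
  (∀ x ∈ varsCNF φ, occursVI x t) ∧ (∀ C ∈ φ, occursCI C t) ∧
  (∀ B ∈ postorder t, B.2 ⊆ φ) ∧
  (∀ C ∈ φ, ∀ x ∈ varsC C, ∃ B ∈ postorder t, x ∈ B.1 ∧ C ∈ B.2) ∧
  (∀ x : ℕ, ConnInV x t) ∧ (∀ C : Clause, ConnInC C t)

def treeVarsI : Tree IBag → Finset ℕ
  | BinaryTree.nil => ∅
  | BinaryTree.node B l r => B.1 ∪ treeVarsI l ∪ treeVarsI r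

def projC (C : Clause) (V : Finset ℕ) : Clause := C.filter (fun l => l.1 ∈ V)

def PhiX (φ CL' : CNF) (tx : Tree IBag) : CNF :=
  ((φ \ CL').filter (fun C => (varsC C ∩ treeVarsI tx).Nonempty)).image
    (fun C => projC C (treeVarsI tx))

def Principal (φ CL' : CNF) (tx : Tree IBag) (S : Finset Lit) : CNF :=
  restrictCNF (PhiX φ CL' tx) S

def AssignsExactly (S : Finset Lit) (V : Finset ℕ) : Prop :=
  WellFormed S ∧ S.image Prod.fst = V

def ParentedAt (t xt : Tree IBag) (Bp : IBag) : Prop :=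
  (xt = t ∧ Bp = (∅, ∅)) ∨
  ∃ (B' : IBag) (l r : Tree IBag),
    IsSubtree (Tree.node B' l r) t ∧ (xt = l ∨ xt = r) ∧ Bp = B'

def CLcomp (CL' : CNF) (SS : Finset Lit) (y : Tree IBag) : CNF :=
  (CL' ∩ (rootIB y).2) ∪ (rootIB y).2.filter (fun C => (C ∩ SS).Nonempty)

def Scomp (SS : Finset Lit) (B : IBag) (y : Tree IBag) : Finset Lit :=
  SS.filter (fun l => l.1 ∈ B.1 ∩ (rootIB y).1)

section AuxLemmas

lemma subtree_trans {α : Type} {s u t : Tree α} (h1 : IsSubtree s u) (h2 : IsSubtree u t) :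
    IsSubtree s t := by
  induction h2 with
  | refl => exact h1
  | left _ ih => exact IsSubtree.left ih
  | right _ ih => exact IsSubtree.right ih

lemma subtree_children {α : Type} {a : α} {l r t : Tree α} (h : IsSubtree (Tree.node a l r) t) :
    IsSubtree l t ∧ IsSubtree r t :=
  ⟨subtree_trans (IsSubtree.left (IsSubtree.refl l)) h,
   subtree_trans (IsSubtree.right (IsSubtree.refl r)) h⟩

lemma postorder_subtree {s t : Tree IBag} (h : IsSubtree s t) :
    ∀ B ∈ postorder s, B ∈ postorder t := by
  induction h with
  | refl => exact fun B hB => hB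
  | left _ ih =>
      intro B hB
      simp only [postorder, List.mem_append]
      exact Or.inl (Or.inl (ih B hB))
  | right _ ih =>
      intro B hB
      simp only [postorder, List.mem_append]
      exact Or.inl (Or.inr (ih B hB))

lemma occV_mono {x : ℕ} {s t : Tree IBag} (h : IsSubtree s t) (ho : occursVI x s) :
    occursVI x t := by
  obtain ⟨B, h1, h2⟩ := ho
  exact ⟨B, postorder_subtree h B h1, h2⟩

lemma mem_treeVars {x : ℕ} : ∀ s : Tree IBag, x ∈ treeVarsI s ↔ occursVI x s := by
  intro s
  induction s with
  | nil => simp [treeVarsI, occursVI, postorder]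
  | node B l r ihl ihr =>
      simp only [treeVarsI, occursVI, postorder, List.mem_append, List.mem_singleton,
        Finset.mem_union] at *
      constructor
      · rintro ((h | h) | h)
        · exact ⟨B, Or.inr rfl, h⟩
        · obtain ⟨B', h1, h2⟩ := ihl.mp h
          exact ⟨B', Or.inl (Or.inl h1), h2⟩
        · obtain ⟨B', h1, h2⟩ := ihr.mp h
          exact ⟨B', Or.inl (Or.inr h1), h2⟩
      · rintro ⟨B', (h1 | h1) | h1, h2⟩
        · exact Or.inl (Or.inr (ihl.mpr ⟨B', h1, h2⟩))
        · exact Or.inr (ihr.mpr ⟨B', h1, h2⟩)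
        · subst h1; exact Or.inl (Or.inl h2)

lemma connV_sub {x : ℕ} {s t : Tree IBag} (h : IsSubtree s t) (hc : ConnInV x t) :
    ConnInV x s := by
  induction h with
  | refl => exact hc
  | left _ ih =>
      simp only [ConnInV] at hc
      exact ih hc.1
  | right _ ih =>
      simp only [ConnInV] at hc
      exact ih hc.2.1

lemma chainC_sub {C : Clause} {s t : Tree IBag} (h : IsSubtree s t) (hc : ChainC C t) :
    ChainC C s := by
  induction h with
  | refl => exact hc
  | left _ ih =>
      simp only [ChainC] at hc
      exact ih hc.2.2.1
  | right _ ih =>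
      simp only [ChainC] at hc
      exact ih hc.2.2.2

lemma down {x : ℕ} {s t : Tree IBag} (h : IsSubtree s t) :
    ConnInV x t → x ∈ (rootIB t).1 → occursVI x s → x ∈ (rootIB s).1 := by
  induction h with
  | refl => exact fun _ hr _ => hr
  | @left l r a h ih =>
      intro hc hr ho
      simp only [ConnInV] at hc
      exact ih hc.1 (hc.2.2.2.1 hr (occV_mono h ho)) ho
  | @right l r a h ih =>
      intro hc hr ho
      simp only [ConnInV] at hc
      exact ih hc.2.1 (hc.2.2.2.2 hr (occV_mono h ho)) ho

lemma sepL {x : ℕ} {B : IBag} {l r t : Tree IBag} (h : IsSubtree (Tree.node B l r) t)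
    (hc : ConnInV x t) (ho : occursVI x l) (hx : x ∉ B.1) :
    ∀ B₁ ∈ postorder t, x ∈ B₁.1 → B₁ ∈ postorder l := by
  induction h with
  | refl =>
      simp only [ConnInV] at hc
      intro B₁ hB₁ hxB₁
      simp only [postorder, List.mem_append, List.mem_singleton] at hB₁
      rcases hB₁ with (h1 | h1) | h1
      · exact h1
      · exact absurd (hc.2.2.1 ho ⟨B₁, h1, hxB₁⟩) hx
      · subst h1; exact absurd hxB₁ hx
  | @left l' r' a hsub ih =>
      simp only [ConnInV] at hc
      intro B₁ hB₁ hxB₁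
      have hos : occursVI x (Tree.node B l r) :=
        occV_mono (IsSubtree.left (IsSubtree.refl l)) ho
      have hol' : occursVI x l' := occV_mono hsub hos
      simp only [postorder, List.mem_append, List.mem_singleton] at hB₁
      have habs : x ∈ a.1 → False := by
        intro hxa
        exact hx (down hsub hc.1 (hc.2.2.2.1 hxa hol') hos)
      rcases hB₁ with (h1 | h1) | h1
      · exact ih hc.1 B₁ h1 hxB₁
      · exact absurd (hc.2.2.1 hol' ⟨B₁, h1, hxB₁⟩) habs
      · subst h1; exact absurd hxB₁ habs
  | @right l' r' a hsub ih =>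
      simp only [ConnInV] at hc
      intro B₁ hB₁ hxB₁
      have hos : occursVI x (Tree.node B l r) :=
        occV_mono (IsSubtree.left (IsSubtree.refl l)) ho
      have hor' : occursVI x r' := occV_mono hsub hos
      simp only [postorder, List.mem_append, List.mem_singleton] at hB₁
      have habs : x ∈ a.1 → False := by
        intro hxa
        exact hx (down hsub hc.2.1 (hc.2.2.2.2 hxa hor') hos)
      rcases hB₁ with (h1 | h1) | h1
      · exact absurd (hc.2.2.1 ⟨B₁, h1, hxB₁⟩ hor') habs
      · exact ih hc.2.1 B₁ h1 hxB₁
      · subst h1; exact absurd hxB₁ habs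

lemma sepR {x : ℕ} {B : IBag} {l r t : Tree IBag} (h : IsSubtree (Tree.node B l r) t)
    (hc : ConnInV x t) (ho : occursVI x r) (hx : x ∉ B.1) :
    ∀ B₁ ∈ postorder t, x ∈ B₁.1 → B₁ ∈ postorder r := by
  induction h with
  | refl =>
      simp only [ConnInV] at hc
      intro B₁ hB₁ hxB₁
      simp only [postorder, List.mem_append, List.mem_singleton] at hB₁
      rcases hB₁ with (h1 | h1) | h1
      · exact absurd (hc.2.2.1 ⟨B₁, h1, hxB₁⟩ ho) hx
      · exact h1
      · subst h1; exact absurd hxB₁ hx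
  | @left l' r' a hsub ih =>
      simp only [ConnInV] at hc
      intro B₁ hB₁ hxB₁
      have hos : occursVI x (Tree.node B l r) :=
        occV_mono (IsSubtree.right (IsSubtree.refl r)) ho
      have hol' : occursVI x l' := occV_mono hsub hos
      simp only [postorder, List.mem_append, List.mem_singleton] at hB₁
      have habs : x ∈ a.1 → False := by
        intro hxa
        exact hx (down hsub hc.1 (hc.2.2.2.1 hxa hol') hos)
      rcases hB₁ with (h1 | h1) | h1
      · exact ih hc.1 B₁ h1 hxB₁
      · exact absurd (hc.2.2.1 hol' ⟨B₁, h1, hxB₁⟩) habs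
      · subst h1; exact absurd hxB₁ habs
  | @right l' r' a hsub ih =>
      simp only [ConnInV] at hc
      intro B₁ hB₁ hxB₁
      have hos : occursVI x (Tree.node B l r) :=
        occV_mono (IsSubtree.right (IsSubtree.refl r)) ho
      have hor' : occursVI x r' := occV_mono hsub hos
      simp only [postorder, List.mem_append, List.mem_singleton] at hB₁
      have habs : x ∈ a.1 → False := by
        intro hxa
        exact hx (down hsub hc.2.1 (hc.2.2.2.2 hxa hor') hos)
      rcases hB₁ with (h1 | h1) | h1
      · exact absurd (hc.2.2.1 ⟨B₁, h1, hxB₁⟩ hor') habs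
      · exact ih hc.2.1 B₁ h1 hxB₁
      · subst h1; exact absurd hxB₁ habs

lemma mem_restrict {ψ : CNF} {S : Finset Lit} {D : Clause} :
    D ∈ restrictCNF ψ S ↔ ∃ C, C ∈ ψ ∧ C ∩ S = ∅ ∧ D = C \ negLits S := by
  constructor
  · intro h
    obtain ⟨C, hC, rfl⟩ := Finset.mem_image.mp h
    obtain ⟨h1, h2⟩ := Finset.mem_filter.mp hC
    exact ⟨C, h1, h2, rfl⟩
  · rintro ⟨C, h1, h2, rfl⟩
    exact Finset.mem_image_of_mem _ (Finset.mem_filter.mpr ⟨h1, h2⟩)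

lemma mem_PhiX {φ CL' : CNF} {tx : Tree IBag} {P : Clause} :
    P ∈ PhiX φ CL' tx ↔ ∃ C, C ∈ φ ∧ C ∉ CL' ∧ (varsC C ∩ treeVarsI tx).Nonempty ∧
      P = projC C (treeVarsI tx) := by
  constructor
  · intro h
    obtain ⟨C, hC, rfl⟩ := Finset.mem_image.mp h
    obtain ⟨h1, h2⟩ := Finset.mem_filter.mp hC
    obtain ⟨h3, h4⟩ := Finset.mem_sdiff.mp h1
    exact ⟨C, h3, h4, h2, rfl⟩
  · rintro ⟨C, h1, h2, h3, rfl⟩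
    exact Finset.mem_image_of_mem _ (Finset.mem_filter.mpr ⟨Finset.mem_sdiff.mpr ⟨h1, h2⟩, h3⟩)

lemma mem_negLits {S : Finset Lit} {l : Lit} : l ∈ negLits S ↔ (l.1, !l.2) ∈ S := by
  rcases l with ⟨v, b⟩
  simp only [negLits, Finset.mem_image, Prod.mk.injEq]
  constructor
  · rintro ⟨⟨u, c⟩, hm, h1, h2⟩
    simp only at h1 h2
    subst h1
    have : c = !b := by cases c <;> cases b <;> simp_all
    subst this
    exact hm
  · intro h
    exact ⟨(v, !b), h, rfl, by simp⟩

lemma wf_not {W : Finset Lit} (hWF : WellFormed W) {v : ℕ} {b : Bool}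
    (h1 : (v, b) ∈ W) (h2 : (v, !b) ∈ W) : False := by
  cases b
  · exact hWF v ⟨h2, h1⟩
  · exact hWF v ⟨h1, h2⟩

end AuxLemmas

lemma litD (φ CL' : CNF) (tx : Tree IBag) (B : IBag) (S S' : Finset Lit)
    (hWvars : (S ∪ S').image Prod.fst = B.1)
    (D : Clause) (hD : D ∈ restrictCNF (Principal φ CL' tx S) S') :
    ∀ l ∈ D, l.1 ∈ treeVarsI tx ∧ l.1 ∉ B.1 := by
  rw [Principal, mem_restrict] at hD
  obtain ⟨Q, hQmem, hQS', hDQ⟩ := hD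
  rw [mem_restrict] at hQmem
  obtain ⟨P, hPmem, hPS, hQP⟩ := hQmem
  rw [mem_PhiX] at hPmem
  obtain ⟨C, hCφ, hCCL, hCne, hPC⟩ := hPmem
  intro l hl
  have hlQ : l ∈ Q ∧ l ∉ negLits S' := by
    have := hDQ ▸ hl
    exact Finset.mem_sdiff.mp this
  have hlP : l ∈ P ∧ l ∉ negLits S := by
    have := hQP ▸ hlQ.1
    exact Finset.mem_sdiff.mp this
  have hlC : l ∈ C ∧ l.1 ∈ treeVarsI tx := by
    have := hPC ▸ hlP.1
    exact Finset.mem_filter.mp this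
  refine ⟨hlC.2, ?_⟩
  intro hxB
  obtain ⟨m, hmW, hm1⟩ := Finset.mem_image.mp (hWvars ▸ hxB)
  by_cases hb : m.2 = l.2
  · have hml : m = l := Prod.ext hm1 hb
    rw [hml] at hmW
    rcases Finset.mem_union.mp hmW with h | h
    · exact Finset.eq_empty_iff_forall_notMem.mp hPS l (Finset.mem_inter.mpr ⟨hlP.1, h⟩)
    · exact Finset.eq_empty_iff_forall_notMem.mp hQS' l (Finset.mem_inter.mpr ⟨hlQ.1, h⟩)
  · have hml : m = (l.1, !l.2) := by
      rcases m with ⟨u, c⟩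
      rcases l with ⟨v, b⟩
      simp only at hm1 hb ⊢
      subst hm1
      cases c <;> cases b <;> simp_all
    rw [hml] at hmW
    rcases Finset.mem_union.mp hmW with h | h
    · exact hlP.2 (mem_negLits.mpr h)
    · exact hlQ.2 (mem_negLits.mpr h)

lemma key (φ CL' : CNF) (tx c o : Tree IBag) (B : IBag) (S S' : Finset Lit)
    (htv : treeVarsI tx = B.1 ∪ treeVarsI c ∪ treeVarsI o)
    (hWvars : (S ∪ S').image Prod.fst = B.1)
    (hWF : WellFormed (S ∪ S'))
    (H1 : ∀ x, x ∈ treeVarsI c → x ∈ treeVarsI o → x ∈ B.1)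
    (H2 : ∀ x, x ∈ B.1 → x ∈ treeVarsI c → x ∈ (rootIB c).1)
    (H3c : ∀ C ∈ φ, ∀ x ∈ varsC C, x ∈ treeVarsI c → x ∉ B.1 → occursCI C c)
    (H3o : ∀ C ∈ φ, ∀ x ∈ varsC C, x ∈ treeVarsI o → x ∉ B.1 → occursCI C o)
    (Hch : ∀ C ∈ φ, ¬(occursCI C c ∧ occursCI C o))
    (D : Clause) (hD : D ∈ restrictCNF (Principal φ CL' tx S) S')
    (l₀ : Lit) (hl₀ : l₀ ∈ D) (hl₀c : l₀.1 ∈ treeVarsI c) :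
    D ∈ Principal φ (CLcomp CL' (S ∪ S') c) c (Scomp (S ∪ S') B c) ∧
      ∀ l ∈ D, l.1 ∈ treeVarsI c ∧ l.1 ∉ B.1 := by
  have hnotB : ∀ l ∈ D, l.1 ∉ B.1 := fun l hl => (litD φ CL' tx B S S' hWvars D hD l hl).2
  rw [Principal, mem_restrict] at hD
  obtain ⟨Q, hQmem, hQS', hDQ⟩ := hD
  rw [mem_restrict] at hQmem
  obtain ⟨P, hPmem, hPS, hQP⟩ := hQmem
  rw [mem_PhiX] at hPmem
  obtain ⟨C, hCφ, hCCL, hCne, hPC⟩ := hPmem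
  have hDsub : ∀ l ∈ D, l ∈ C ∧ l.1 ∈ treeVarsI tx ∧ l ∉ negLits S ∧ l ∉ negLits S' := by
    intro l hl
    have h1 := Finset.mem_sdiff.mp (hDQ ▸ hl)
    have h2 := Finset.mem_sdiff.mp (hQP ▸ h1.1)
    have h3 := Finset.mem_filter.mp (hPC ▸ h2.1)
    exact ⟨h3.1, h3.2, h2.2, h1.2⟩
  have hmemP : ∀ l ∈ C, l.1 ∈ treeVarsI tx → l ∈ P := by
    intro l h1 h2
    rw [hPC, projC, Finset.mem_filter]
    exact ⟨h1, h2⟩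
  have hmemD : ∀ l ∈ C, l.1 ∈ treeVarsI tx → l ∉ negLits S → l ∉ negLits S' → l ∈ D := by
    intro l h1 h2 h3 h4
    rw [hDQ, Finset.mem_sdiff, hQP, Finset.mem_sdiff]
    exact ⟨⟨hmemP l h1 h2, h3⟩, h4⟩
  have hCW : ∀ l ∈ C, l ∉ S ∪ S' := by
    intro l hlC hlW
    have hx : l.1 ∈ B.1 := hWvars ▸ Finset.mem_image_of_mem Prod.fst hlW
    have hltx : l.1 ∈ treeVarsI tx := by
      rw [htv]; exact Finset.mem_union_left _ (Finset.mem_union_left _ hx)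
    have hlP : l ∈ P := hmemP l hlC hltx
    rcases Finset.mem_union.mp hlW with hlS | hlS'
    · exact Finset.eq_empty_iff_forall_notMem.mp hPS l (Finset.mem_inter.mpr ⟨hlP, hlS⟩)
    · have hlnS : l ∉ negLits S := by
        intro hneg
        rw [mem_negLits] at hneg
        exact wf_not hWF hlW (Finset.mem_union_left _ hneg)
      have hlQ : l ∈ Q := by
        rw [hQP, Finset.mem_sdiff]; exact ⟨hlP, hlnS⟩
      exact Finset.eq_empty_iff_forall_notMem.mp hQS' l (Finset.mem_inter.mpr ⟨hlQ, hlS'⟩)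
  have hl₀C : l₀ ∈ C := (hDsub l₀ hl₀).1
  have hl₀var : l₀.1 ∈ varsC C := Finset.mem_image_of_mem Prod.fst hl₀C
  have hoccc : occursCI C c := H3c C hCφ l₀.1 hl₀var hl₀c (hnotB l₀ hl₀)
  have hDc : ∀ l ∈ D, l.1 ∈ treeVarsI c := by
    intro l hl
    obtain ⟨hlC, hltx, _, _⟩ := hDsub l hl
    have hlB := hnotB l hl
    rw [htv] at hltx
    rcases Finset.mem_union.mp hltx with h | ho'
    · rcases Finset.mem_union.mp h with h | h
      · exact absurd h hlB
      · exact h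
    · by_contra hnc
      exact Hch C hCφ ⟨hoccc, H3o C hCφ l.1 (Finset.mem_image_of_mem Prod.fst hlC) ho' hlB⟩
  refine ⟨?_, fun l hl => ⟨hDc l hl, hnotB l hl⟩⟩
  have hCnotCLc : C ∉ CLcomp CL' (S ∪ S') c := by
    intro h
    rcases Finset.mem_union.mp h with h | h
    · exact hCCL (Finset.mem_inter.mp h).1
    · obtain ⟨_, hne⟩ := Finset.mem_filter.mp h
      obtain ⟨l, hlm⟩ := hne
      obtain ⟨h1, h2⟩ := Finset.mem_inter.mp hlm
      exact hCW l h1 h2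
  have hScW : Scomp (S ∪ S') B c ⊆ S ∪ S' := Finset.filter_subset _ _
  rw [Principal, mem_restrict]
  refine ⟨projC C (treeVarsI c), ?_, ?_, ?_⟩
  · rw [mem_PhiX]
    exact ⟨C, hCφ, hCnotCLc, ⟨l₀.1, Finset.mem_inter.mpr ⟨hl₀var, hl₀c⟩⟩, rfl⟩
  · rw [Finset.eq_empty_iff_forall_notMem]
    intro l hlm
    obtain ⟨h1, h2⟩ := Finset.mem_inter.mp hlm
    exact hCW l (Finset.filter_subset _ _ h1) (hScW h2)
  · ext l
    rw [Finset.mem_sdiff, projC, Finset.mem_filter]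
    constructor
    · intro hl
      obtain ⟨hlC, hltx, hlnS, hlnS'⟩ := hDsub l hl
      refine ⟨⟨hlC, hDc l hl⟩, ?_⟩
      intro hneg
      have hmem : (l.1, !l.2) ∈ S ∪ S' := hScW (mem_negLits.mp hneg)
      rcases Finset.mem_union.mp hmem with h | h
      · exact hlnS (mem_negLits.mpr h)
      · exact hlnS' (mem_negLits.mpr h)
    · rintro ⟨⟨hlC, hlc⟩, hlneg⟩
      have hltx : l.1 ∈ treeVarsI tx := by
        rw [htv]; exact Finset.mem_union_left _ (Finset.mem_union_right _ hlc)
      have hnW : (l.1, !l.2) ∉ S ∪ S' := by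
        intro hmem
        have hxB : l.1 ∈ B.1 := by
          rw [← hWvars]
          exact Finset.mem_image.mpr ⟨(l.1, !l.2), hmem, rfl⟩
        have hrc : l.1 ∈ (rootIB c).1 := H2 l.1 hxB hlc
        have hsc : (l.1, !l.2) ∈ Scomp (S ∪ S') B c :=
          Finset.mem_filter.mpr ⟨hmem, Finset.mem_inter.mpr ⟨hxB, hrc⟩⟩
        exact hlneg (mem_negLits.mpr hsc)
      apply hmemD l hlC hltx
      · intro h; exact hnW (Finset.mem_union_left _ (mem_negLits.mp h))
      · intro h; exact hnW (Finset.mem_union_right _ (mem_negLits.mp h))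

theorem stmt12 (φ : CNF) (t : Tree IBag)
    (hdec : IsIncDecomp φ t) (hos : ∀ C ∈ φ, ChainC C t)
    (Bp B : IBag) (y₁ y₂ : Tree IBag)
    (hx : ParentedAt t (Tree.node B y₁ y₂) Bp)
    (CL' : CNF) (hCL : CL' ⊆ B.2)
    (S : Finset Lit) (hS : AssignsExactly S (Bp.1 ∩ B.1))
    (S' : Finset Lit) (hS' : AssignsExactly S' (B.1 \ Bp.1))
    (hunsat : UnsatCNF (restrictCNF (Principal φ CL' (Tree.node B y₁ y₂) S) S')) :
    (∅ : Clause) ∈ restrictCNF (Principal φ CL' (Tree.node B y₁ y₂) S) S' ∨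
    UnsatCNF (Principal φ (CLcomp CL' (S ∪ S') y₁) y₁ (Scomp (S ∪ S') B y₁)) ∨
    UnsatCNF (Principal φ (CLcomp CL' (S ∪ S') y₂) y₂ (Scomp (S ∪ S') B y₂)) := by
  by_contra hcon
  push_neg at hcon
  obtain ⟨hemp, h1, h2⟩ := hcon
  rw [UnsatCNF, not_not] at h1 h2
  obtain ⟨a₁, ha₁⟩ := h1
  obtain ⟨a₂, ha₂⟩ := h2
  have hsub : IsSubtree (Tree.node B y₁ y₂) t := by
    rcases hx with ⟨heq, -⟩ | ⟨B', l, r, hsub', hor, -⟩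
    · exact heq ▸ IsSubtree.refl _
    · rcases hor with rfl | rfl
      · exact (subtree_children hsub').1
      · exact (subtree_children hsub').2
  obtain ⟨hWFS, hSv⟩ := hS
  obtain ⟨hWFS', hS'v⟩ := hS'
  have hWvars : (S ∪ S').image Prod.fst = B.1 := by
    rw [Finset.image_union, hSv, hS'v]
    ext x
    simp only [Finset.mem_union, Finset.mem_inter, Finset.mem_sdiff]
    tauto
  have hWF : WellFormed (S ∪ S') := by
    intro x hx2
    obtain ⟨hT, hF⟩ := hx2
    have himg : ∀ b : Bool, (x, b) ∈ S → x ∈ Bp.1 ∩ B.1 := by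
      intro b hb
      rw [← hSv]
      exact Finset.mem_image.mpr ⟨(x, b), hb, rfl⟩
    have himg' : ∀ b : Bool, (x, b) ∈ S' → x ∈ B.1 \ Bp.1 := by
      intro b hb
      rw [← hS'v]
      exact Finset.mem_image.mpr ⟨(x, b), hb, rfl⟩
    rcases Finset.mem_union.mp hT with hT | hT <;> rcases Finset.mem_union.mp hF with hF | hF
    · exact hWFS x ⟨hT, hF⟩
    · have p1 := himg true hT
      have p2 := himg' false hF
      rw [Finset.mem_inter] at p1
      rw [Finset.mem_sdiff] at p2
      exact p2.2 p1.1
    · have p1 := himg false hF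
      have p2 := himg' true hT
      rw [Finset.mem_inter] at p1
      rw [Finset.mem_sdiff] at p2
      exact p2.2 p1.1
    · exact hWFS' x ⟨hT, hF⟩
  have hconn : ∀ x, ConnInV x (Tree.node B y₁ y₂) :=
    fun x => connV_sub hsub (hdec.2.2.2.2.1 x)
  have H1a : ∀ x, x ∈ treeVarsI y₁ → x ∈ treeVarsI y₂ → x ∈ B.1 := by
    intro x hx1 hx2
    have hc := hconn x
    simp only [ConnInV] at hc
    exact hc.2.2.1 ((mem_treeVars y₁).mp hx1) ((mem_treeVars y₂).mp hx2)
  have H2a : ∀ x, x ∈ B.1 → x ∈ treeVarsI y₁ → x ∈ (rootIB y₁).1 := by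
    intro x hx1 hx2
    have hc := hconn x
    simp only [ConnInV] at hc
    exact hc.2.2.2.1 hx1 ((mem_treeVars y₁).mp hx2)
  have H2b : ∀ x, x ∈ B.1 → x ∈ treeVarsI y₂ → x ∈ (rootIB y₂).1 := by
    intro x hx1 hx2
    have hc := hconn x
    simp only [ConnInV] at hc
    exact hc.2.2.2.2 hx1 ((mem_treeVars y₂).mp hx2)
  have H3a : ∀ C ∈ φ, ∀ x ∈ varsC C, x ∈ treeVarsI y₁ → x ∉ B.1 → occursCI C y₁ := by
    intro C hC x hxv hx1 hxB
    obtain ⟨B₁, hB₁, hxB₁, hCB₁⟩ := hdec.2.2.2.1 C hC x hxv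
    exact ⟨B₁, sepL hsub (hdec.2.2.2.2.1 x) ((mem_treeVars y₁).mp hx1) hxB B₁ hB₁ hxB₁, hCB₁⟩
  have H3b : ∀ C ∈ φ, ∀ x ∈ varsC C, x ∈ treeVarsI y₂ → x ∉ B.1 → occursCI C y₂ := by
    intro C hC x hxv hx1 hxB
    obtain ⟨B₁, hB₁, hxB₁, hCB₁⟩ := hdec.2.2.2.1 C hC x hxv
    exact ⟨B₁, sepR hsub (hdec.2.2.2.2.1 x) ((mem_treeVars y₂).mp hx1) hxB B₁ hB₁ hxB₁, hCB₁⟩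
  have Hch : ∀ C ∈ φ, ¬(occursCI C y₁ ∧ occursCI C y₂) := by
    intro C hC
    have hchain := chainC_sub hsub (hos C hC)
    simp only [ChainC] at hchain
    exact hchain.1
  have htv1 : treeVarsI (Tree.node B y₁ y₂) = B.1 ∪ treeVarsI y₁ ∪ treeVarsI y₂ := rfl
  have htv2 : treeVarsI (Tree.node B y₁ y₂) = B.1 ∪ treeVarsI y₂ ∪ treeVarsI y₁ := by
    rw [htv1]
    ext x
    simp only [Finset.mem_union]
    tauto
  apply hunsat
  refine ⟨fun x => if x ∈ treeVarsI y₁ then a₁ x else a₂ x, ?_⟩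
  intro D hD
  have hDne : D.Nonempty := by
    rw [Finset.nonempty_iff_ne_empty]
    rintro rfl
    exact hemp hD
  obtain ⟨l₀, hl₀⟩ := hDne
  obtain ⟨hl₀tx, hl₀B⟩ := litD φ CL' _ B S S' hWvars D hD l₀ hl₀
  rw [htv1] at hl₀tx
  have hside : l₀.1 ∈ treeVarsI y₁ ∨ l₀.1 ∈ treeVarsI y₂ := by
    rcases Finset.mem_union.mp hl₀tx with h | h
    · rcases Finset.mem_union.mp h with h | h
      · exact absurd h hl₀B
      · exact Or.inl h
    · exact Or.inr h
  rcases hside with hc | hc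
  · obtain ⟨hmem, hvars⟩ :=
      key φ CL' _ y₁ y₂ B S S' htv1 hWvars hWF H1a H2a H3a H3b Hch D hD l₀ hl₀ hc
    obtain ⟨l, hlD, hla⟩ := ha₁ D hmem
    refine ⟨l, hlD, ?_⟩
    have hly : l.1 ∈ treeVarsI y₁ := (hvars l hlD).1
    simp only [if_pos hly]
    exact hla
  · obtain ⟨hmem, hvars⟩ :=
      key φ CL' _ y₂ y₁ B S S' htv2 hWvars hWF (fun x p q => H1a x q p) H2b H3b H3a
        (fun C hC h => Hch C hC ⟨h.2, h.1⟩) D hD l₀ hl₀ hc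
    obtain ⟨l, hlD, hla⟩ := ha₂ D hmem
    refine ⟨l, hlD, ?_⟩
    obtain ⟨hl2, hlB⟩ := hvars l hlD
    have hn1 : l.1 ∉ treeVarsI y₁ := fun h => hlB (H1a l.1 h hl2)
    simp only [if_neg hn1]
    exact hla
end

section
/- Let φ be an unsatisfiable CNF of primal treewidth at most k with n variables. Then there is a regular resolution refutation of φ of size O(2^k · n). -/
def occursV {V : Type} (v : V) (t : Tree (Finset V)) : Prop := ∃ B ∈ postorder t, v ∈ B

def rootBag {V : Type} : Tree (Finset V) → Finset V
  | BinaryTree.nil => ∅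
  | BinaryTree.node B _ _ => B

def ConnIn {V : Type} (v : V) : Tree (Finset V) → Prop
  | BinaryTree.nil => True
  | BinaryTree.node B l r => ConnIn v l ∧ ConnIn v r ∧ (occursV v l → occursV v r → v ∈ B) ∧
      (v ∈ B → occursV v l → v ∈ rootBag l) ∧ (v ∈ B → occursV v r → v ∈ rootBag r)

/-- Paths in a branching program: from node `i`, following the recorded literals, reach `j`. -/
inductive RPath {m : ℕ} (f : Fin m → (ℕ × Fin m × Fin m) ⊕ Clause) :
    Fin m → List Lit → Fin m → Prop
  | nil (i : Fin m) : RPath f i [] i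
  | cons {i : Fin m} {x : ℕ} {i₀ i₁ : Fin m} {b : Bool} {L : List Lit} {j : Fin m}
      (h : f i = Sum.inl (x, i₀, i₁)) (hp : RPath f (bif b then i₁ else i₀) L j) :
      RPath f i ((x, b) :: L) j

/-- There is a regular resolution refutation of φ with at most `sz` nodes. -/
def HasRR (φ : CNF) (sz : ℕ) : Prop :=
  ∃ (m : ℕ) (f : Fin m → (ℕ × Fin m × Fin m) ⊕ Clause) (s : Fin m),
    m ≤ sz ∧
    (∀ (i : Fin m) (x : ℕ) (i₀ i₁ : Fin m), f i = Sum.inl (x, i₀, i₁) → i < i₀ ∧ i < i₁) ∧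
    (∀ (i : Fin m) (L : List Lit) (j : Fin m), RPath f i L j → (L.map Prod.fst).Nodup) ∧
    (∀ (L : List Lit) (j : Fin m) (C : Clause), RPath f s L j → f j = Sum.inr C →
      C ∈ φ ∧ ∀ l ∈ C, (l.1, !l.2) ∈ L)

/-! ### Auxiliary development -/

open Classical

attribute [local instance] Classical.propDecidable

noncomputable section RRAux

/-- Variables occurring in a tree of bags. -/
noncomputable def occF : Tree (Finset ℕ) → Finset ℕ
  | BinaryTree.nil => ∅
  | BinaryTree.node B l r => occF l ∪ occF r ∪ B

lemma occursV_iff_occF (x : ℕ) : ∀ s : Tree (Finset ℕ), occursV x s ↔ x ∈ occF s := by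
  intro s
  induction s with
  | nil => simp [occursV, postorder, occF]
  | node B l r ihl ihr =>
      simp only [occursV, postorder, occF, List.mem_append, Finset.mem_union, List.mem_singleton]
      constructor
      · rintro ⟨B', hB', hx⟩
        rcases hB' with (h | h) | h
        · exact Or.inl (Or.inl ((ihl).mp ⟨B', h, hx⟩))
        · exact Or.inl (Or.inr ((ihr).mp ⟨B', h, hx⟩))
        · subst h; exact Or.inr hx
      · rintro ((h | h) | h)
        · obtain ⟨B', hB', hx⟩ := (ihl).mpr h
          exact ⟨B', Or.inl (Or.inl hB'), hx⟩
        · obtain ⟨B', hB', hx⟩ := (ihr).mpr h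
          exact ⟨B', Or.inl (Or.inr hB'), hx⟩
        · exact ⟨B, Or.inr rfl, h⟩

lemma IsSubtree.trans' {α : Type} {a b c : Tree α} (hab : IsSubtree a b) (hbc : IsSubtree b c) :
    IsSubtree a c := by
  induction hbc with
  | refl => exact hab
  | left h ih => exact IsSubtree.left ih
  | right h ih => exact IsSubtree.right ih

lemma subtree_left {α : Type} {B : α} {l r : Tree α} : IsSubtree l (Tree.node B l r) :=
  IsSubtree.left (IsSubtree.refl l)

lemma subtree_right {α : Type} {B : α} {l r : Tree α} : IsSubtree r (Tree.node B l r) :=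
  IsSubtree.right (IsSubtree.refl r)

lemma ConnIn.subtree {x : ℕ} {s t : Tree (Finset ℕ)} (hc : ConnIn x t) (hs : IsSubtree s t) :
    ConnIn x s := by
  induction hs with
  | refl => exact hc
  | left h ih => exact ih hc.1
  | right h ih => exact ih hc.2.1

lemma rootBag_mem_postorder {s t : Tree (Finset ℕ)} (hs : IsSubtree s t) (hne : s ≠ Tree.nil) :
    rootBag s ∈ postorder t := by
  induction hs with
  | refl =>
      cases s with
      | nil => exact absurd rfl hne
      | node B l r => simp [postorder, rootBag]
  | left h ih =>
      simp only [postorder, List.mem_append]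
      exact Or.inl (Or.inl ih)
  | right h ih =>
      simp only [postorder, List.mem_append]
      exact Or.inl (Or.inr ih)

lemma mem_postorder_subtree {s t : Tree (Finset ℕ)} (hs : IsSubtree s t) {B : Finset ℕ}
    (hB : B ∈ postorder s) : B ∈ postorder t := by
  induction hs with
  | refl => exact hB
  | left h ih => simp only [postorder, List.mem_append]; exact Or.inl (Or.inl ih)
  | right h ih => simp only [postorder, List.mem_append]; exact Or.inl (Or.inr ih)


lemma numNodes_le_of_subtree {α : Type} {s t : Tree α} (hs : IsSubtree s t) :
    s.numNodes ≤ t.numNodes := by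
  induction hs with
  | refl => exact le_refl _
  | left h ih => simp only [Tree.numNodes, BinaryTree.numNodes] at *; omega
  | right h ih => simp only [Tree.numNodes, BinaryTree.numNodes] at *; omega

/-- If `x` is in the root bag of `u` and occurs in subtree `s`, then it is in the root bag of `s`. -/
lemma path_lemma {x : ℕ} {s u : Tree (Finset ℕ)} (hs : IsSubtree s u) :
    ConnIn x u → x ∈ rootBag u → occursV x s → x ∈ rootBag s := by
  induction hs with
  | refl => intro _ h _; exact h
  | @left l r a hsub ih =>
      intro hc hx hocc
      have hoccl : occursV x l := by
        obtain ⟨B, hB, hxB⟩ := hocc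
        exact ⟨B, mem_postorder_subtree hsub hB, hxB⟩
      exact ih hc.1 (hc.2.2.2.1 hx hoccl) hocc
  | @right l r a hsub ih =>
      intro hc hx hocc
      have hoccr : occursV x r := by
        obtain ⟨B, hB, hxB⟩ := hocc
        exact ⟨B, mem_postorder_subtree hsub hB, hxB⟩
      exact ih hc.2.1 (hc.2.2.2.2 hx hoccr) hocc

/-- Separation: if `x` occurs in subtree `s` but is not in its root bag,
then every bag of `t` containing `x` lies in `s`. -/
lemma sep_lemma {x : ℕ} {s t : Tree (Finset ℕ)} (hs : IsSubtree s t) :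
    ConnIn x t → occursV x s → x ∉ rootBag s →
      ∀ B' ∈ postorder t, x ∈ B' → B' ∈ postorder s := by
  induction hs with
  | refl => intro _ _ _ B' hB' _; exact hB'
  | @left l r a hsub ih =>
      intro hc hocc hnr B' hB' hxB'
      have hoccl : occursV x l := by
        obtain ⟨B, hB, hxB⟩ := hocc
        exact ⟨B, mem_postorder_subtree hsub hB, hxB⟩
      simp only [postorder, List.mem_append, List.mem_singleton] at hB'
      rcases hB' with (h | h) | h
      · exact ih hc.1 hocc hnr B' h hxB'
      · exact absurd (path_lemma hsub hc.1 (hc.2.2.2.1 (hc.2.2.1 hoccl ⟨B', h, hxB'⟩) hoccl) hocc) hnr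
      · subst h
        exact absurd (path_lemma hsub hc.1 (hc.2.2.2.1 hxB' hoccl) hocc) hnr
  | @right l r a hsub ih =>
      intro hc hocc hnr B' hB' hxB'
      have hoccr : occursV x r := by
        obtain ⟨B, hB, hxB⟩ := hocc
        exact ⟨B, mem_postorder_subtree hsub hB, hxB⟩
      simp only [postorder, List.mem_append, List.mem_singleton] at hB'
      rcases hB' with (h | h) | h
      · exact absurd (path_lemma hsub hc.2.1 (hc.2.2.2.2 (hc.2.2.1 ⟨B', h, hxB'⟩ hoccr) hoccr) hocc) hnr
      · exact ih hc.2.1 hocc hnr B' h hxB'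
      · subst h
        exact absurd (path_lemma hsub hc.2.1 (hc.2.2.2.2 hxB' hoccr) hocc) hnr

/-- The topmost subtree whose root bag contains `x`. -/
noncomputable def topOcc (x : ℕ) : Tree (Finset ℕ) → Tree (Finset ℕ)
  | BinaryTree.nil => Tree.nil
  | BinaryTree.node B l r =>
      if x ∈ B then Tree.node B l r
      else if x ∈ occF l then topOcc x l else topOcc x r

lemma topOcc_of_mem_rootBag {x : ℕ} {s : Tree (Finset ℕ)} (h : x ∈ rootBag s) :
    topOcc x s = s := by
  cases s with
  | nil => rfl
  | node B l r => simp only [rootBag] at h; simp [topOcc, h]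

lemma topOcc_spec {x : ℕ} : ∀ {s : Tree (Finset ℕ)}, occursV x s →
    x ∈ rootBag (topOcc x s) ∧ IsSubtree (topOcc x s) s := by
  intro s
  induction s with
  | nil => intro h; rw [occursV_iff_occF] at h; simp [occF] at h
  | node B l r ihl ihr =>
      intro h
      rw [occursV_iff_occF] at h
      simp only [occF, Finset.mem_union] at h
      by_cases hB : x ∈ B
      · refine ⟨?_, ?_⟩ <;> simp [topOcc, hB, rootBag, IsSubtree.refl]
      · by_cases hl : x ∈ occF l
        · have := ihl ((occursV_iff_occF x l).mpr hl)
          simp only [topOcc, hB, if_false, hl, if_true]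
          exact ⟨this.1, IsSubtree.left this.2⟩
        · have hr : x ∈ occF r := by rcases h with (h | h) | h <;> simp_all
          have := ihr ((occursV_iff_occF x r).mpr hr)
          simp only [topOcc, hB, if_false, hl, if_false]
          exact ⟨this.1, IsSubtree.right this.2⟩

/-- If `x` occurs in subtree `s` but not in its root bag, the top occurrence in `t`
equals that in `s`. -/
lemma topOcc_subtree {x : ℕ} {s t : Tree (Finset ℕ)} (hs : IsSubtree s t) :
    ConnIn x t → occursV x s → x ∉ rootBag s → topOcc x t = topOcc x s := by
  induction hs with
  | refl => intro _ _ _; rfl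
  | @left l r a hsub ih =>
      intro hc hocc hnr
      have hoccl : occursV x l := by
        obtain ⟨B, hB, hxB⟩ := hocc
        exact ⟨B, mem_postorder_subtree hsub hB, hxB⟩
      have hxa : x ∉ a := fun hxa => hnr (path_lemma hsub hc.1 (hc.2.2.2.1 hxa hoccl) hocc)
      have heq : topOcc x (Tree.node a l r) = topOcc x l := by
        simp [topOcc, hxa, (occursV_iff_occF x l).mp hoccl]
      rw [heq]; exact ih hc.1 hocc hnr
  | @right l r a hsub ih =>
      intro hc hocc hnr
      have hoccr : occursV x r := by
        obtain ⟨B, hB, hxB⟩ := hocc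
        exact ⟨B, mem_postorder_subtree hsub hB, hxB⟩
      have hxa : x ∉ a := fun hxa => hnr (path_lemma hsub hc.2.1 (hc.2.2.2.2 hxa hoccr) hocc)
      have hxl : x ∉ occF l := by
        intro hxl
        exact hxa (hc.2.2.1 ((occursV_iff_occF x l).mpr hxl) hoccr)
      have heq : topOcc x (Tree.node a l r) = topOcc x r := by
        simp [topOcc, hxa, hxl]
      rw [heq]; exact ih hc.2.1 hocc hnr

/-- If `x` is in the root bag of a subtree `s`, then its top occurrence is at least as large. -/
lemma topOcc_size {x : ℕ} {s t : Tree (Finset ℕ)} (hs : IsSubtree s t) :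
    ConnIn x t → x ∈ rootBag s → s.numNodes ≤ (topOcc x t).numNodes := by
  induction hs with
  | refl => intro _ h; rw [topOcc_of_mem_rootBag h]
  | @left l r a hsub ih =>
      intro hc hx
      have hne : s ≠ Tree.nil := by
        intro h; subst h; simp [rootBag] at hx
      have hocc : occursV x s := ⟨rootBag s, rootBag_mem_postorder (IsSubtree.refl s) hne, hx⟩
      have hoccl : occursV x l := by
        obtain ⟨B, hB, hxB⟩ := hocc
        exact ⟨B, mem_postorder_subtree hsub hB, hxB⟩
      by_cases hxa : x ∈ a
      · rw [topOcc_of_mem_rootBag (s := Tree.node a l r) hxa]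
        have := numNodes_le_of_subtree hsub
        simp only [Tree.numNodes, BinaryTree.numNodes] at *; omega
      · have heq : topOcc x (Tree.node a l r) = topOcc x l := by
          simp [topOcc, hxa, (occursV_iff_occF x l).mp hoccl]
        rw [heq]; exact ih hc.1 hx
  | @right l r a hsub ih =>
      intro hc hx
      have hne : s ≠ Tree.nil := by
        intro h; subst h; simp [rootBag] at hx
      have hocc : occursV x s := ⟨rootBag s, rootBag_mem_postorder (IsSubtree.refl s) hne, hx⟩
      have hoccr : occursV x r := by
        obtain ⟨B, hB, hxB⟩ := hocc
        exact ⟨B, mem_postorder_subtree hsub hB, hxB⟩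
      by_cases hxa : x ∈ a
      · rw [topOcc_of_mem_rootBag (s := Tree.node a l r) hxa]
        have := numNodes_le_of_subtree hsub
        simp only [Tree.numNodes, BinaryTree.numNodes] at *; omega
      · have hxl : x ∉ occF l := by
          intro hxl
          exact hxa (hc.2.2.1 ((occursV_iff_occF x l).mpr hxl) hoccr)
        have heq : topOcc x (Tree.node a l r) = topOcc x r := by
          simp [topOcc, hxa, hxl]
        rw [heq]; exact ih hc.2.1 hx


/-! ### States and the branching program -/

/-- Domain (set of variables) of a partial assignment given as a set of literals. -/
noncomputable def doms (γ : Finset Lit) : Finset ℕ := γ.image Prod.fst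

lemma mem_doms {z : ℕ} {γ : Finset Lit} : z ∈ doms γ ↔ ∃ b, (z, b) ∈ γ := by
  constructor
  · intro h
    obtain ⟨p, hp, hz⟩ := Finset.mem_image.mp h
    exact ⟨p.2, by rwa [show (z, p.2) = p from by rw [← hz]]⟩
  · rintro ⟨b, hb⟩
    exact Finset.mem_image.mpr ⟨(z, b), hb, rfl⟩

lemma doms_insert {x : ℕ} {b : Bool} {γ : Finset Lit} :
    doms (insert (x, b) γ) = insert x (doms γ) := by
  simp [doms, Finset.image_insert]

lemma doms_mono {γ' γ : Finset Lit} (h : γ' ⊆ γ) : doms γ' ⊆ doms γ :=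
  Finset.image_subset_image h

lemma wf_subset {γ' γ : Finset Lit} (h : γ' ⊆ γ) (hwf : WellFormed γ) : WellFormed γ' :=
  fun x hx => hwf x ⟨h hx.1, h hx.2⟩

/-- Root-bag variables that are variables of the CNF. -/
noncomputable def rbv (φ : CNF) (s : Tree (Finset ℕ)) : Finset ℕ := rootBag s ∩ varsCNF φ

/-- Occurring variables that are variables of the CNF. -/
noncomputable def occv (φ : CNF) (s : Tree (Finset ℕ)) : Finset ℕ := occF s ∩ varsCNF φ

def extendsA (a : ℕ → Bool) (γ : Finset Lit) : Prop := ∀ p ∈ γ, a p.1 = p.2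

/-- The part of `φ` relevant below `s` (given assigned variables `doms γ`) cannot be
satisfied consistently with `γ`. -/
def UnsatBelow (φ : CNF) (s : Tree (Finset ℕ)) (γ : Finset Lit) : Prop :=
  ¬ ∃ a : ℕ → Bool, extendsA a γ ∧ ∀ C ∈ φ, varsC C ⊆ occF s ∪ doms γ → satClause a C

def falsifiedIn (φ : CNF) (γ : Finset Lit) : Prop :=
  ∃ C, C ∈ φ ∧ varsC C ⊆ doms γ ∧ ∀ l ∈ C, (l.1, !l.2) ∈ γ

noncomputable def restrTo (S : Finset ℕ) (γ : Finset Lit) : Finset Lit :=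
  γ.filter (fun p => p.1 ∈ S)

lemma restrTo_subset {S : Finset ℕ} {γ : Finset Lit} : restrTo S γ ⊆ γ :=
  Finset.filter_subset _ _

lemma mem_restrTo {S : Finset ℕ} {γ : Finset Lit} {p : Lit} :
    p ∈ restrTo S γ ↔ p ∈ γ ∧ p.1 ∈ S := Finset.mem_filter

lemma doms_restrTo {S : Finset ℕ} {γ : Finset Lit} : doms (restrTo S γ) = doms γ ∩ S := by
  ext z
  simp only [mem_doms, Finset.mem_inter, mem_restrTo]
  constructor
  · rintro ⟨b, hb, hz⟩; exact ⟨⟨b, hb⟩, hz⟩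
  · rintro ⟨⟨b, hb⟩, hz⟩; exact ⟨b, hb, hz⟩

/-- One step of the refutation search: either emit the next query node, or a falsified clause. -/
noncomputable def descend (φ : CNF) : Tree (Finset ℕ) → Finset Lit → (ℕ × Finset Lit) ⊕ Clause
  | BinaryTree.nil, γ =>
      if h : falsifiedIn φ γ then Sum.inr h.choose else Sum.inr ∅
  | BinaryTree.node B l r, γ =>
      if h1 : ((rbv φ (Tree.node B l r)) \ doms γ).Nonempty then
        Sum.inl (((rbv φ (Tree.node B l r)) \ doms γ).min' h1, γ)
      else if h : falsifiedIn φ γ then Sum.inr h.choose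
      else if UnsatBelow φ l (restrTo (rootBag l) γ) then descend φ l (restrTo (rootBag l) γ)
      else descend φ r (restrTo (rootBag r) γ)

/-- Canonical domain of the state in which `x` is queried. -/
noncomputable def Dx (φ : CNF) (t : Tree (Finset ℕ)) (x : ℕ) : Finset ℕ :=
  (rbv φ (topOcc x t)).filter (fun y => topOcc y t ≠ topOcc x t ∨ y < x)

noncomputable def code (D P : Finset ℕ) : Finset Lit :=
  P.image (fun z => (z, true)) ∪ (D \ P).image (fun z => (z, false))

/-- The set of all query nodes of the branching program. -/
noncomputable def Q (φ : CNF) (t : Tree (Finset ℕ)) : Finset (ℕ × Finset Lit) :=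
  (varsCNF φ).biUnion (fun x => (Dx φ t x).powerset.image (fun P => (x, code (Dx φ t x) P)))

lemma mem_code {D P : Finset ℕ} {p : Lit} :
    p ∈ code D P ↔ ((p.2 = true ∧ p.1 ∈ P) ∨ (p.2 = false ∧ p.1 ∈ D \ P)) := by
  obtain ⟨z, b⟩ := p
  simp only [code, Finset.mem_union, Finset.mem_image, Prod.mk.injEq]
  constructor
  · rintro (⟨a, ha, rfl, rfl⟩ | ⟨a, ha, rfl, rfl⟩)
    · exact Or.inl ⟨rfl, ha⟩
    · exact Or.inr ⟨rfl, ha⟩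
  · rintro (⟨rfl, h⟩ | ⟨rfl, h⟩)
    · exact Or.inl ⟨z, h, rfl, rfl⟩
    · exact Or.inr ⟨z, h, rfl, rfl⟩

lemma doms_code {D P : Finset ℕ} (hP : P ⊆ D) : doms (code D P) = D := by
  ext z
  simp only [mem_doms]
  constructor
  · rintro ⟨b, hb⟩
    rcases mem_code.mp hb with ⟨_, h⟩ | ⟨_, h⟩
    · exact hP h
    · exact (Finset.mem_sdiff.mp h).1
  · intro hz
    by_cases hzP : z ∈ P
    · exact ⟨true, mem_code.mpr (Or.inl ⟨rfl, hzP⟩)⟩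
    · exact ⟨false, mem_code.mpr (Or.inr ⟨rfl, Finset.mem_sdiff.mpr ⟨hz, hzP⟩⟩)⟩

lemma wf_code {D P : Finset ℕ} : WellFormed (code D P) := by
  intro z ⟨h1, h2⟩
  rcases mem_code.mp h1 with ⟨_, h⟩ | ⟨h, _⟩
  · rcases mem_code.mp h2 with ⟨h', _⟩ | ⟨_, h'⟩
    · simp at h'
    · exact (Finset.mem_sdiff.mp h').2 h
  · simp at h

lemma eq_code {γ : Finset Lit} {D : Finset ℕ} (hwf : WellFormed γ) (hd : doms γ = D) :
    γ = code D (D.filter (fun z => (z, true) ∈ γ)) := by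
  ext p
  obtain ⟨z, b⟩ := p
  rw [mem_code]
  simp only [Finset.mem_filter, Finset.mem_sdiff]
  constructor
  · intro hp
    have hz : z ∈ D := hd ▸ mem_doms.mpr ⟨b, hp⟩
    cases b with
    | true => exact Or.inl ⟨rfl, hz, hp⟩
    | false =>
        refine Or.inr ⟨rfl, ⟨hz, fun h => ?_⟩⟩
        exact hwf z ⟨h.2, hp⟩
  · rintro (⟨rfl, _, h⟩ | ⟨rfl, ⟨hz, hn⟩⟩)
    · exact h
    · have : z ∈ doms γ := hd ▸ hz
      obtain ⟨b, hb⟩ := mem_doms.mp this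
      cases b with
      | true => exact absurd ⟨hz, hb⟩ hn
      | false => exact hb

lemma mem_Q_iff {φ : CNF} {t : Tree (Finset ℕ)} {x : ℕ} {γ : Finset Lit} :
    (x, γ) ∈ Q φ t ↔ x ∈ varsCNF φ ∧ doms γ = Dx φ t x ∧ WellFormed γ := by
  constructor
  · intro h
    simp only [Q, Finset.mem_biUnion, Finset.mem_image, Finset.mem_powerset] at h
    obtain ⟨x', hx', P, hP, heq⟩ := h
    obtain ⟨h1, h2⟩ := Prod.mk.injEq .. ▸ heq
    subst h1; subst h2
    exact ⟨hx', doms_code hP, wf_code⟩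
  · rintro ⟨hx, hd, hwf⟩
    simp only [Q, Finset.mem_biUnion, Finset.mem_image, Finset.mem_powerset]
    exact ⟨x, hx, (Dx φ t x).filter (fun z => (z, true) ∈ γ), Finset.filter_subset _ _,
      by rw [← eq_code hwf hd]⟩


lemma varsC_subset_varsCNF {φ : CNF} {C : Clause} (hC : C ∈ φ) : varsC C ⊆ varsCNF φ :=
  fun v hv => Finset.mem_biUnion.mpr ⟨C, hC, hv⟩

lemma mem_varsC {C : Clause} {v : ℕ} : v ∈ varsC C ↔ ∃ b, (v, b) ∈ C := by
  constructor
  · intro h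
    obtain ⟨p, hp, hz⟩ := Finset.mem_image.mp h
    exact ⟨p.2, by rwa [show (v, p.2) = p from by rw [← hz]]⟩
  · rintro ⟨b, hb⟩
    exact Finset.mem_image.mpr ⟨(v, b), hb, rfl⟩

section Main

variable {φ : CNF} {t : Tree (Finset ℕ)}

lemma pairloc (hconn : ∀ x, ConnIn x t) {B : Finset ℕ} {l r : Tree (Finset ℕ)}
    (hsub : IsSubtree (Tree.node B l r) t) {w : ℕ} (hw : w ∈ occF l) (hwB : w ∉ B)
    {B' : Finset ℕ} (hB' : B' ∈ postorder t) (hwB' : w ∈ B') : B' ∈ postorder l := by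
  have hcs : ConnIn w (Tree.node B l r) := (hconn w).subtree hsub
  have hoccs : occursV w (Tree.node B l r) :=
    (occursV_iff_occF _ _).mpr (by simp [occF, hw])
  have h := sep_lemma hsub (hconn w) hoccs (by simpa [rootBag] using hwB) B' hB' hwB'
  simp only [postorder, List.mem_append, List.mem_singleton] at h
  rcases h with (h | h) | h
  · exact h
  · exact absurd (hcs.2.2.1 ((occursV_iff_occF _ _).mpr hw) ⟨B', h, hwB'⟩) hwB
  · subst h; exact absurd hwB' hwB

lemma pairloc_r (hconn : ∀ x, ConnIn x t) {B : Finset ℕ} {l r : Tree (Finset ℕ)}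
    (hsub : IsSubtree (Tree.node B l r) t) {w : ℕ} (hw : w ∈ occF r) (hwB : w ∉ B)
    {B' : Finset ℕ} (hB' : B' ∈ postorder t) (hwB' : w ∈ B') : B' ∈ postorder r := by
  have hcs : ConnIn w (Tree.node B l r) := (hconn w).subtree hsub
  have hoccs : occursV w (Tree.node B l r) :=
    (occursV_iff_occF _ _).mpr (by simp [occF, hw])
  have h := sep_lemma hsub (hconn w) hoccs (by simpa [rootBag] using hwB) B' hB' hwB'
  simp only [postorder, List.mem_append, List.mem_singleton] at h
  rcases h with (h | h) | h
  · exact absurd (hcs.2.2.1 ⟨B', h, hwB'⟩ ((occursV_iff_occF _ _).mpr hw)) hwB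
  · exact h
  · subst h; exact absurd hwB' hwB

lemma trichotomy (hconn : ∀ x, ConnIn x t)
    (hpair : ∀ C ∈ φ, ∀ x ∈ varsC C, ∀ y ∈ varsC C, ∃ B ∈ postorder t, x ∈ B ∧ y ∈ B)
    {B : Finset ℕ} {l r : Tree (Finset ℕ)} (hsub : IsSubtree (Tree.node B l r) t)
    {C : Clause} (hC : C ∈ φ) (hCv : varsC C ⊆ occF (Tree.node B l r)) :
    varsC C ⊆ B ∨ varsC C ⊆ occF l ∨ varsC C ⊆ occF r := by
  by_cases hl : ∃ w ∈ varsC C, w ∈ occF l ∧ w ∉ B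
  · obtain ⟨w, hwC, hwl, hwB⟩ := hl
    refine Or.inr (Or.inl (fun u huC => ?_))
    obtain ⟨B', hB', hu, hw⟩ := hpair C hC u huC w hwC
    exact (occursV_iff_occF u l).mp ⟨B', pairloc hconn hsub hwl hwB hB' hw, hu⟩
  · by_cases hr : ∃ w ∈ varsC C, w ∈ occF r ∧ w ∉ B
    · obtain ⟨w, hwC, hwr, hwB⟩ := hr
      refine Or.inr (Or.inr (fun u huC => ?_))
      obtain ⟨B', hB', hu, hw⟩ := hpair C hC u huC w hwC
      exact (occursV_iff_occF u r).mp ⟨B', pairloc_r hconn hsub hwr hwB hB' hw, hu⟩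
    · push_neg at hl hr
      refine Or.inl (fun u huC => ?_)
      have := hCv huC
      simp only [occF, Finset.mem_union] at this
      rcases this with (h | h) | h
      · exact hl u huC h
      · exact hr u huC h
      · exact h

lemma progress (hconn : ∀ x, ConnIn x t)
    (hpair : ∀ C ∈ φ, ∀ x ∈ varsC C, ∀ y ∈ varsC C, ∃ B ∈ postorder t, x ∈ B ∧ y ∈ B)
    {B : Finset ℕ} {l r : Tree (Finset ℕ)} (hsub : IsSubtree (Tree.node B l r) t)
    {γ : Finset Lit} (hwf : WellFormed γ) (hdom : doms γ = rbv φ (Tree.node B l r))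
    (hnf : ¬ falsifiedIn φ γ) (hU : UnsatBelow φ (Tree.node B l r) γ) :
    UnsatBelow φ l (restrTo (rootBag l) γ) ∨ UnsatBelow φ r (restrTo (rootBag r) γ) := by
  by_contra hcon
  push_neg at hcon
  obtain ⟨hconl, hconr⟩ := hcon
  unfold UnsatBelow at hconl hconr
  push_neg at hconl hconr
  obtain ⟨al, hal, hsatl⟩ := hconl
  obtain ⟨ar, har, hsatr⟩ := hconr
  set a : ℕ → Bool := fun v =>
    if (v, true) ∈ γ then true
    else if (v, false) ∈ γ then false
    else if v ∈ occF l then al v else ar v with ha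
  have hext : extendsA a γ := by
    rintro ⟨v, b⟩ hp
    cases b with
    | true => simp only [ha]; rw [if_pos hp]
    | false =>
        have : (v, true) ∉ γ := fun h => hwf v ⟨h, hp⟩
        simp only [ha]; rw [if_neg this, if_pos hp]
  have hgam : ∀ v b, (v, b) ∈ γ → a v = b := fun v b h => hext (v, b) h
  have hnogam : ∀ v, v ∉ doms γ → ((v, true) ∉ γ ∧ (v, false) ∉ γ) := by
    intro v hv
    constructor <;> intro h <;> exact hv (mem_doms.mpr ⟨_, h⟩)
  -- agreement with al on occF l
  have hagl : ∀ v, v ∈ occF l → a v = al v := by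
    intro v hv
    by_cases hvd : v ∈ doms γ
    · obtain ⟨b, hb⟩ := mem_doms.mp hvd
      have hvB : v ∈ B ∧ v ∈ varsCNF φ := by
        have := hdom ▸ hvd
        simpa [rbv, rootBag] using this
      have hcs : ConnIn v (Tree.node B l r) := (hconn v).subtree hsub
      have hvrl : v ∈ rootBag l := hcs.2.2.2.1 hvB.1 ((occursV_iff_occF _ _).mpr hv)
      have : (v, b) ∈ restrTo (rootBag l) γ := mem_restrTo.mpr ⟨hb, hvrl⟩
      rw [hgam v b hb]; exact (hal (v, b) this).symm
    · obtain ⟨h1, h2⟩ := hnogam v hvd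
      simp only [ha]; rw [if_neg h1, if_neg h2, if_pos hv]
  -- agreement with ar on occF r ∩ varsCNF
  have hagr : ∀ v, v ∈ occF r → v ∈ varsCNF φ → a v = ar v := by
    intro v hv hvcnf
    by_cases hvd : v ∈ doms γ
    · obtain ⟨b, hb⟩ := mem_doms.mp hvd
      have hvB : v ∈ B := by
        have := hdom ▸ hvd
        simpa [rbv, rootBag] using (Finset.mem_inter.mp this).1
      have hcs : ConnIn v (Tree.node B l r) := (hconn v).subtree hsub
      have hvrr : v ∈ rootBag r := hcs.2.2.2.2 hvB ((occursV_iff_occF _ _).mpr hv)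
      have : (v, b) ∈ restrTo (rootBag r) γ := mem_restrTo.mpr ⟨hb, hvrr⟩
      rw [hgam v b hb]; exact (har (v, b) this).symm
    · obtain ⟨h1, h2⟩ := hnogam v hvd
      have hvl : v ∉ occF l := by
        intro hvl
        have hcs : ConnIn v (Tree.node B l r) := (hconn v).subtree hsub
        have hvB : v ∈ B := hcs.2.2.1 ((occursV_iff_occF _ _).mpr hvl)
          ((occursV_iff_occF _ _).mpr hv)
        exact hvd (hdom ▸ Finset.mem_inter.mpr ⟨(by simpa [rootBag] using hvB), hvcnf⟩)
      simp only [ha]; rw [if_neg h1, if_neg h2, if_neg hvl]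
  -- a satisfies all relevant clauses, contradicting hU
  apply hU
  refine ⟨a, hext, fun C hC hCsub => ?_⟩
  have hCsub' : varsC C ⊆ occF (Tree.node B l r) := by
    intro v hv
    rcases Finset.mem_union.mp (hCsub hv) with h | h
    · exact h
    · have := hdom ▸ h
      have : v ∈ B := by simpa [rbv, rootBag] using (Finset.mem_inter.mp this).1
      simp [occF, this]
  rcases trichotomy hconn hpair hsub hC hCsub' with h | h | h
  · -- vars ⊆ B, hence fully assigned; not falsified, so satisfied
    have hCd : varsC C ⊆ doms γ := by
      intro v hv
      exact hdom ▸ Finset.mem_inter.mpr ⟨(by simpa [rootBag] using h hv),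
        varsC_subset_varsCNF hC hv⟩
    have : ¬ (varsC C ⊆ doms γ ∧ ∀ p ∈ C, (p.1, !p.2) ∈ γ) := by
      intro hcon2
      exact hnf ⟨C, hC, hcon2⟩
    push_neg at this
    obtain ⟨p, hp, hpn⟩ := this hCd
    have hvd : p.1 ∈ doms γ := hCd (mem_varsC.mpr ⟨p.2, by simpa using hp⟩)
    obtain ⟨b, hb⟩ := mem_doms.mp hvd
    have hbp : b = p.2 := by
      by_contra hne
      have : b = !p.2 := by cases b <;> cases p.2 <;> simp_all
      exact hpn (this ▸ hb)
    exact ⟨p, hp, by rw [hgam p.1 b hb, hbp]⟩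
  · -- vars ⊆ occF l
    obtain ⟨p, hp, hsat⟩ := hsatl C hC (fun v hv => Finset.mem_union.mpr (Or.inl (h hv)))
    refine ⟨p, hp, ?_⟩
    rw [hagl p.1 (h (mem_varsC.mpr ⟨p.2, by simpa using hp⟩))]
    exact hsat
  · -- vars ⊆ occF r
    obtain ⟨p, hp, hsat⟩ := hsatr C hC (fun v hv => Finset.mem_union.mpr (Or.inl (h hv)))
    refine ⟨p, hp, ?_⟩
    have hv : p.1 ∈ varsC C := mem_varsC.mpr ⟨p.2, by simpa using hp⟩
    rw [hagr p.1 (h hv) (varsC_subset_varsCNF hC hv)]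
    exact hsat


/-- Invariant carried through `descend`. -/
structure INVD (φ : CNF) (t s : Tree (Finset ℕ)) (γ : Finset Lit) : Prop where
  sub : IsSubtree s t
  wf : WellFormed γ
  domsub : doms γ ⊆ rbv φ s
  ord : ∀ z ∈ doms γ, ∀ y ∈ rbv φ s, y ∉ doms γ → topOcc z t = topOcc y t → z < y
  top : ∀ y ∈ occv φ s, y ∉ doms γ → topOcc y t = topOcc y s

lemma rootBag_subset_occF : ∀ s : Tree (Finset ℕ), rootBag s ⊆ occF s := by
  intro s
  cases s with
  | nil => simp [rootBag]
  | node B l r => intro v hv; simp only [rootBag] at hv; simp [occF, hv]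

/-- INVD is preserved when descending into the left child. -/
lemma invd_left (hconn : ∀ x, ConnIn x t) {B : Finset ℕ} {l r : Tree (Finset ℕ)}
    {γ : Finset Lit} (inv : INVD φ t (Tree.node B l r) γ)
    (hdom : doms γ = rbv φ (Tree.node B l r)) :
    INVD φ t l (restrTo (rootBag l) γ) := by
  set s := Tree.node B l r with hs
  set γl := restrTo (rootBag l) γ with hγl
  have hsubl : IsSubtree l t := (subtree_left (B := B) (r := r)).trans' inv.sub
  have hdl : doms γl = doms γ ∩ rootBag l := doms_restrTo
  refine ⟨hsubl, wf_subset restrTo_subset inv.wf, ?_, ?_, ?_⟩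
  · intro z hz
    rw [hdl] at hz
    obtain ⟨hz1, hz2⟩ := Finset.mem_inter.mp hz
    exact Finset.mem_inter.mpr ⟨hz2, (Finset.mem_inter.mp (inv.domsub hz1)).2⟩
  · intro z hz y hy hynd htopeq
    -- y is not assigned at all, and its top is l; z is in rootBag s, whose top is too big
    have hyB : y ∈ rootBag l := (Finset.mem_inter.mp hy).1
    have hycnf : y ∈ varsCNF φ := (Finset.mem_inter.mp hy).2
    have hynd' : y ∉ doms γ := by
      intro h
      exact hynd (hdl ▸ Finset.mem_inter.mpr ⟨h, hyB⟩)
    have hynB : y ∉ B := by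
      intro h
      exact hynd' (hdom ▸ Finset.mem_inter.mpr ⟨(by simpa [hs, rootBag] using h), hycnf⟩)
    have hoccyl : occursV y l := ⟨rootBag l, rootBag_mem_postorder (IsSubtree.refl l)
      (by rintro rfl; simp [rootBag] at hyB), hyB⟩
    have hoccys : occursV y s := by
      rw [occursV_iff_occF] at hoccyl ⊢
      simp [hs, occF, hoccyl]
    have htys : topOcc y t = topOcc y l := by
      rw [topOcc_subtree inv.sub (hconn y) hoccys (by simpa [hs, rootBag] using hynB)]
      simp only [hs, topOcc, hynB, if_false, (occursV_iff_occF y l).mp hoccyl, if_true]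
    have htyl : topOcc y t = l := by
      rw [htys, topOcc_of_mem_rootBag hyB]
    -- z's top has at least numNodes s nodes
    have hz' : z ∈ doms γ := restrTo_subset (mem_doms.mp hz).choose_spec |> fun _ => by
      exact doms_mono restrTo_subset hz
    have hzB : z ∈ rootBag s := (Finset.mem_inter.mp (inv.domsub hz')).1
    have hsize := topOcc_size inv.sub (hconn z) hzB
    rw [htopeq, htyl] at hsize
    simp only [hs, Tree.numNodes, BinaryTree.numNodes] at hsize
    omega
  · intro y hy hynd
    obtain ⟨hyo, hycnf⟩ := Finset.mem_inter.mp hy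
    have hynd' : y ∉ doms γ := by
      intro h
      have hyB : y ∈ B := by
        have := hdom ▸ h
        simpa [hs, rootBag] using (Finset.mem_inter.mp this).1
      have hcs : ConnIn y s := (hconn y).subtree inv.sub
      have : y ∈ rootBag l := hcs.2.2.2.1 hyB ((occursV_iff_occF _ _).mpr hyo)
      exact hynd (hdl ▸ Finset.mem_inter.mpr ⟨h, this⟩)
    have hynB : y ∉ B := by
      intro h
      exact hynd' (hdom ▸ Finset.mem_inter.mpr ⟨(by simpa [hs, rootBag] using h), hycnf⟩)
    have := inv.top y (Finset.mem_inter.mpr ⟨(by simp [hs, occF, hyo]), hycnf⟩) hynd'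
    rw [this]
    simp only [hs, topOcc, hynB, if_false, hyo, if_true]

/-- INVD is preserved when descending into the right child. -/
lemma invd_right (hconn : ∀ x, ConnIn x t) {B : Finset ℕ} {l r : Tree (Finset ℕ)}
    {γ : Finset Lit} (inv : INVD φ t (Tree.node B l r) γ)
    (hdom : doms γ = rbv φ (Tree.node B l r)) :
    INVD φ t r (restrTo (rootBag r) γ) := by
  set s := Tree.node B l r with hs
  set γr := restrTo (rootBag r) γ with hγr
  have hsubr : IsSubtree r t := (subtree_right (B := B) (l := l)).trans' inv.sub
  have hdr : doms γr = doms γ ∩ rootBag r := doms_restrTo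
  have hcsx : ∀ y, ConnIn y s := fun y => (hconn y).subtree inv.sub
  refine ⟨hsubr, wf_subset restrTo_subset inv.wf, ?_, ?_, ?_⟩
  · intro z hz
    rw [hdr] at hz
    obtain ⟨hz1, hz2⟩ := Finset.mem_inter.mp hz
    exact Finset.mem_inter.mpr ⟨hz2, (Finset.mem_inter.mp (inv.domsub hz1)).2⟩
  · intro z hz y hy hynd htopeq
    have hyB : y ∈ rootBag r := (Finset.mem_inter.mp hy).1
    have hycnf : y ∈ varsCNF φ := (Finset.mem_inter.mp hy).2
    have hynd' : y ∉ doms γ := by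
      intro h
      exact hynd (hdr ▸ Finset.mem_inter.mpr ⟨h, hyB⟩)
    have hynB : y ∉ B := by
      intro h
      exact hynd' (hdom ▸ Finset.mem_inter.mpr ⟨(by simpa [hs, rootBag] using h), hycnf⟩)
    have hoccyr : occursV y r := ⟨rootBag r, rootBag_mem_postorder (IsSubtree.refl r)
      (by rintro rfl; simp [rootBag] at hyB), hyB⟩
    have hoccys : occursV y s := by
      rw [occursV_iff_occF] at hoccyr ⊢
      simp [hs, occF, hoccyr]
    have hynl : y ∉ occF l := by
      intro h
      exact hynB ((hcsx y).2.2.1 ((occursV_iff_occF _ _).mpr h) hoccyr)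
    have htys : topOcc y t = topOcc y r := by
      rw [topOcc_subtree inv.sub (hconn y) hoccys (by simpa [hs, rootBag] using hynB)]
      simp only [hs, topOcc, hynB, if_false, hynl]
    have htyr : topOcc y t = r := by
      rw [htys, topOcc_of_mem_rootBag hyB]
    have hz' : z ∈ doms γ := doms_mono restrTo_subset hz
    have hzB : z ∈ rootBag s := (Finset.mem_inter.mp (inv.domsub hz')).1
    have hsize := topOcc_size inv.sub (hconn z) hzB
    rw [htopeq, htyr] at hsize
    simp only [hs, Tree.numNodes, BinaryTree.numNodes] at hsize
    omega
  · intro y hy hynd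
    obtain ⟨hyo, hycnf⟩ := Finset.mem_inter.mp hy
    have hynd' : y ∉ doms γ := by
      intro h
      have hyB : y ∈ B := by
        have := hdom ▸ h
        simpa [hs, rootBag] using (Finset.mem_inter.mp this).1
      have : y ∈ rootBag r := (hcsx y).2.2.2.2 hyB ((occursV_iff_occF _ _).mpr hyo)
      exact hynd (hdr ▸ Finset.mem_inter.mpr ⟨h, this⟩)
    have hynB : y ∉ B := by
      intro h
      exact hynd' (hdom ▸ Finset.mem_inter.mpr ⟨(by simpa [hs, rootBag] using h), hycnf⟩)
    have hynl : y ∉ occF l := by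
      intro h
      exact hynB ((hcsx y).2.2.1 ((occursV_iff_occF _ _).mpr h)
        ((occursV_iff_occF _ _).mpr hyo))
    have := inv.top y (Finset.mem_inter.mpr ⟨(by simp [hs, occF, hyo]), hycnf⟩) hynd'
    rw [this]
    simp only [hs, topOcc, hynB, if_false, hynl]

lemma fut_left (hconn : ∀ x, ConnIn x t) {B : Finset ℕ} {l r : Tree (Finset ℕ)}
    {γ : Finset Lit} (inv : INVD φ t (Tree.node B l r) γ)
    (hdom : doms γ = rbv φ (Tree.node B l r)) :
    occv φ l \ doms (restrTo (rootBag l) γ) ⊆ occv φ (Tree.node B l r) \ doms γ := by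
  intro v hv
  obtain ⟨hv1, hv2⟩ := Finset.mem_sdiff.mp hv
  obtain ⟨hvo, hvcnf⟩ := Finset.mem_inter.mp hv1
  refine Finset.mem_sdiff.mpr ⟨Finset.mem_inter.mpr ⟨(by simp [occF, hvo]), hvcnf⟩, ?_⟩
  intro h
  have hvB : v ∈ B := by
    have := hdom ▸ h
    simpa [rootBag] using (Finset.mem_inter.mp this).1
  have hcs : ConnIn v (Tree.node B l r) := (hconn v).subtree inv.sub
  have : v ∈ rootBag l := hcs.2.2.2.1 hvB ((occursV_iff_occF _ _).mpr hvo)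
  exact hv2 (doms_restrTo ▸ Finset.mem_inter.mpr ⟨h, this⟩)

lemma fut_right (hconn : ∀ x, ConnIn x t) {B : Finset ℕ} {l r : Tree (Finset ℕ)}
    {γ : Finset Lit} (inv : INVD φ t (Tree.node B l r) γ)
    (hdom : doms γ = rbv φ (Tree.node B l r)) :
    occv φ r \ doms (restrTo (rootBag r) γ) ⊆ occv φ (Tree.node B l r) \ doms γ := by
  intro v hv
  obtain ⟨hv1, hv2⟩ := Finset.mem_sdiff.mp hv
  obtain ⟨hvo, hvcnf⟩ := Finset.mem_inter.mp hv1
  refine Finset.mem_sdiff.mpr ⟨Finset.mem_inter.mpr ⟨(by simp [occF, hvo]), hvcnf⟩, ?_⟩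
  intro h
  have hvB : v ∈ B := by
    have := hdom ▸ h
    simpa [rootBag] using (Finset.mem_inter.mp this).1
  have hcs : ConnIn v (Tree.node B l r) := (hconn v).subtree inv.sub
  have : v ∈ rootBag r := hcs.2.2.2.2 hvB ((occursV_iff_occF _ _).mpr hvo)
  exact hv2 (doms_restrTo ▸ Finset.mem_inter.mpr ⟨h, this⟩)

/-- The main specification of `descend`. -/
lemma descend_spec (hconn : ∀ x, ConnIn x t)
    (hpair : ∀ C ∈ φ, ∀ x ∈ varsC C, ∀ y ∈ varsC C, ∃ B ∈ postorder t, x ∈ B ∧ y ∈ B) :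
    ∀ (s : Tree (Finset ℕ)) (γ : Finset Lit), INVD φ t s γ →
    (∀ x γ', descend φ s γ = Sum.inl (x, γ') →
        γ' ⊆ γ ∧ (x, γ') ∈ Q φ t ∧ topOcc x t ≠ Tree.nil ∧
        occv φ (topOcc x t) \ doms γ' ⊆ occv φ s \ doms γ ∧
        (UnsatBelow φ s γ → UnsatBelow φ (topOcc x t) γ')) ∧
    (∀ C, descend φ s γ = Sum.inr C → UnsatBelow φ s γ →
        C ∈ φ ∧ ∀ p ∈ C, (p.1, !p.2) ∈ γ) := by
  intro s
  induction s with
  | nil =>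
      intro γ inv
      constructor
      · intro x γ' heq
        by_cases h : falsifiedIn φ γ <;> simp [descend, h] at heq
      · intro C heq hU
        by_cases h : falsifiedIn φ γ
        · simp only [descend, dif_pos h] at heq
          obtain ⟨hC1, hC2, hC3⟩ := h.choose_spec
          cases heq
          exact ⟨hC1, hC3⟩
        · exfalso
          -- γ is empty, so φ would have to contain the empty clause
          have hγe : γ = ∅ := by
            have : doms γ ⊆ ∅ := by
              have := inv.domsub
              simpa [rbv, rootBag] using this
            have : doms γ = ∅ := Finset.subset_empty.mp this
            by_contra hne
            obtain ⟨p, hp⟩ := Finset.nonempty_iff_ne_empty.mpr hne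
            exact absurd (mem_doms.mpr ⟨p.2, by rwa [show (p.1, p.2) = p from rfl]⟩)
              (this ▸ Finset.notMem_empty p.1)
          apply hU
          refine ⟨fun _ => true, by simp [extendsA, hγe], fun C' hC' hsub' => ?_⟩
          exfalso
          have hCe : C' = ∅ := by
            by_contra hne
            obtain ⟨p, hp⟩ := Finset.nonempty_iff_ne_empty.mpr hne
            have : p.1 ∈ varsC C' := mem_varsC.mpr ⟨p.2, by rwa [show (p.1, p.2) = p from rfl]⟩
            have := hsub' this
            simp [occF, hγe, doms] at this
          exact h ⟨∅, hCe ▸ hC', by simp [varsC], by simp⟩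
  | node B l r ihl ihr =>
      intro γ inv
      by_cases h1 : ((rbv φ (Tree.node B l r)) \ doms γ).Nonempty
      · -- emission of a query node
        have hstep : descend φ (Tree.node B l r) γ =
            Sum.inl (((rbv φ (Tree.node B l r)) \ doms γ).min' h1, γ) := by
          rw [descend, dif_pos h1]
        set Δ := (rbv φ (Tree.node B l r)) \ doms γ with hΔ
        set x := Δ.min' h1 with hx
        have hxΔ : x ∈ Δ := Finset.min'_mem _ h1
        have hx_rb : x ∈ rbv φ (Tree.node B l r) := (Finset.mem_sdiff.mp hxΔ).1
        have hx_nd : x ∉ doms γ := (Finset.mem_sdiff.mp hxΔ).2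
        have hx_cnf : x ∈ varsCNF φ := (Finset.mem_inter.mp hx_rb).2
        have hx_B : x ∈ rootBag (Tree.node B l r) := (Finset.mem_inter.mp hx_rb).1
        have hx_occ : x ∈ occv φ (Tree.node B l r) :=
          Finset.mem_inter.mpr ⟨rootBag_subset_occF _ hx_B, hx_cnf⟩
        have htop : topOcc x t = Tree.node B l r := by
          rw [inv.top x hx_occ hx_nd, topOcc_of_mem_rootBag hx_B]
        have hQd : doms γ = Dx φ t x := by
          ext z
          simp only [Dx, Finset.mem_filter, htop]
          constructor
          · intro hz
            refine ⟨inv.domsub hz, ?_⟩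
            by_cases hzt : topOcc z t = Tree.node B l r
            · exact Or.inr (inv.ord z hz x hx_rb hx_nd (hzt.trans htop.symm))
            · exact Or.inl hzt
          · rintro ⟨hz_rb, hcond⟩
            by_contra hznd
            have hzΔ : z ∈ Δ := Finset.mem_sdiff.mpr ⟨hz_rb, hznd⟩
            have hzge : x ≤ z := Finset.min'_le Δ z hzΔ
            have hz_occ : z ∈ occv φ (Tree.node B l r) :=
              Finset.mem_inter.mpr ⟨rootBag_subset_occF _ (Finset.mem_inter.mp hz_rb).1,
                (Finset.mem_inter.mp hz_rb).2⟩
            have hzt : topOcc z t = Tree.node B l r := by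
              rw [inv.top z hz_occ hznd,
                topOcc_of_mem_rootBag (Finset.mem_inter.mp hz_rb).1]
            rcases hcond with h | h
            · exact h hzt
            · omega
        constructor
        · intro x' γ' heq
          rw [hstep] at heq
          simp only [Sum.inl.injEq, Prod.mk.injEq] at heq
          obtain ⟨rfl, rfl⟩ := heq
          refine ⟨Finset.Subset.refl _, mem_Q_iff.mpr ⟨hx_cnf, hQd, inv.wf⟩, by rw [htop]; simp, ?_, ?_⟩
          · rw [htop]
          · intro hU; rwa [htop]
        · intro C heq
          rw [hstep] at heq
          simp at heq
      · -- the root bag is fully assigned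
        have hdom : doms γ = rbv φ (Tree.node B l r) := by
          have h2 := Finset.not_nonempty_iff_eq_empty.mp h1
          have := Finset.sdiff_eq_empty_iff_subset.mp h2
          exact Finset.Subset.antisymm inv.domsub this
        by_cases h2 : falsifiedIn φ γ
        · have hstep : descend φ (Tree.node B l r) γ = Sum.inr h2.choose := by
            rw [descend, dif_neg h1, dif_pos h2]
          constructor
          · intro x γ' heq; rw [hstep] at heq; simp at heq
          · intro C heq hU
            rw [hstep] at heq
            obtain ⟨hC1, hC2, hC3⟩ := h2.choose_spec
            cases heq
            exact ⟨hC1, hC3⟩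
        · by_cases h3 : UnsatBelow φ l (restrTo (rootBag l) γ)
          · have hstep : descend φ (Tree.node B l r) γ =
                descend φ l (restrTo (rootBag l) γ) := by
              rw [descend, dif_neg h1, dif_neg h2, if_pos h3]
            have invl := invd_left hconn inv hdom
            obtain ⟨ih1, ih2⟩ := ihl (restrTo (rootBag l) γ) invl
            constructor
            · intro x γ' heq
              rw [hstep] at heq
              obtain ⟨hγ', hQ, htne, hfut, hUn⟩ := ih1 x γ' heq
              refine ⟨hγ'.trans restrTo_subset, hQ, htne,
                hfut.trans (fut_left hconn inv hdom), fun _ => hUn h3⟩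
            · intro C heq hU
              rw [hstep] at heq
              obtain ⟨hC1, hC2⟩ := ih2 C heq h3
              exact ⟨hC1, fun p hp => restrTo_subset (hC2 p hp)⟩
          · have hstep : descend φ (Tree.node B l r) γ =
                descend φ r (restrTo (rootBag r) γ) := by
              rw [descend, dif_neg h1, dif_neg h2, if_neg h3]
            have invr := invd_right hconn inv hdom
            obtain ⟨ih1, ih2⟩ := ihr (restrTo (rootBag r) γ) invr
            constructor
            · intro x γ' heq
              rw [hstep] at heq
              obtain ⟨hγ', hQ, htne, hfut, hUn⟩ := ih1 x γ' heq
              have hUr : UnsatBelow φ (Tree.node B l r) γ →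
                  UnsatBelow φ r (restrTo (rootBag r) γ) := by
                intro hU
                rcases progress hconn hpair inv.sub inv.wf hdom h2 hU with h | h
                · exact absurd h h3
                · exact h
              refine ⟨hγ'.trans restrTo_subset, hQ, htne,
                hfut.trans (fut_right hconn inv hdom), fun hU => hUn (hUr hU)⟩
            · intro C heq hU
              rw [hstep] at heq
              have hUr : UnsatBelow φ r (restrTo (rootBag r) γ) := by
                rcases progress hconn hpair inv.sub inv.wf hdom h2 hU with h | h
                · exact absurd h h3
                · exact h
              obtain ⟨hC1, hC2⟩ := ih2 C heq hUr
              exact ⟨hC1, fun p hp => restrTo_subset (hC2 p hp)⟩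


lemma x_not_mem_Dx {φ : CNF} {t : Tree (Finset ℕ)} {x : ℕ} : x ∉ Dx φ t x := by
  simp [Dx]

lemma invd_init (hocc : ∀ x ∈ varsCNF φ, occursV x t) (hconn : ∀ x, ConnIn x t)
    {x : ℕ} {γ : Finset Lit} (hQ : (x, γ) ∈ Q φ t) (b : Bool) :
    INVD φ t (topOcc x t) (insert (x, b) γ) := by
  obtain ⟨hx_cnf, hdom, hwf⟩ := mem_Q_iff.mp hQ
  have hoccx : occursV x t := hocc x hx_cnf
  obtain ⟨hx_root, hsub⟩ := topOcc_spec hoccx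
  have hx_nd : x ∉ doms γ := fun h => x_not_mem_Dx (hdom ▸ h)
  refine ⟨hsub, ?_, ?_, ?_, ?_⟩
  · intro z hz
    obtain ⟨h1, h2⟩ := hz
    rcases Finset.mem_insert.mp h1 with he1 | h1'
    · obtain ⟨rfl, hb⟩ : z = x ∧ true = b := by simpa [Prod.ext_iff] using he1
      rcases Finset.mem_insert.mp h2 with he2 | h2'
      · rw [← hb] at he2; simp [Prod.ext_iff] at he2
      · exact hx_nd (mem_doms.mpr ⟨false, h2'⟩)
    · rcases Finset.mem_insert.mp h2 with he2 | h2'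
      · obtain ⟨rfl, hb⟩ : z = x ∧ false = b := by simpa [Prod.ext_iff] using he2
        exact hx_nd (mem_doms.mpr ⟨true, h1'⟩)
      · exact hwf z ⟨h1', h2'⟩
  · rw [doms_insert]
    intro z hz
    rcases Finset.mem_insert.mp hz with rfl | hz
    · exact Finset.mem_inter.mpr ⟨hx_root, hx_cnf⟩
    · exact (Finset.filter_subset _ _) (hdom ▸ hz)
  · intro z hz y hy hynd htopeq
    rw [doms_insert] at hz hynd
    have hy_ne_x : y ≠ x := fun h => hynd (by rw [h]; exact Finset.mem_insert_self x _)
    have hy_nd : y ∉ doms γ := fun h => hynd (Finset.mem_insert_of_mem h)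
    have hy_nDx : y ∉ Dx φ t x := hdom ▸ hy_nd
    simp only [Dx, Finset.mem_filter, not_and, not_or, not_lt, ne_eq, not_not] at hy_nDx
    obtain ⟨hy_top, hy_ge⟩ := hy_nDx hy
    have hxy : x < y := lt_of_le_of_ne hy_ge (fun h => hy_ne_x h.symm)
    rcases Finset.mem_insert.mp hz with rfl | hz
    · exact hxy
    · have := hdom ▸ hz
      simp only [Dx, Finset.mem_filter] at this
      rcases this.2 with h | h
      · exact absurd (htopeq.trans hy_top) h
      · omega
  · intro y hy hynd
    rw [doms_insert] at hynd
    have hy_nd : y ∉ doms γ := fun h => hynd (Finset.mem_insert_of_mem h)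
    obtain ⟨hyo, hycnf⟩ := Finset.mem_inter.mp hy
    by_cases hyr : y ∈ rootBag (topOcc x t)
    · have hy_nDx : y ∉ Dx φ t x := hdom ▸ hy_nd
      simp only [Dx, Finset.mem_filter, not_and, not_or, not_lt, ne_eq, not_not] at hy_nDx
      obtain ⟨hy_top, _⟩ := hy_nDx (Finset.mem_inter.mpr ⟨hyr, hycnf⟩)
      rw [hy_top, topOcc_of_mem_rootBag hyr]
    · exact topOcc_subtree hsub (hconn y) ((occursV_iff_occF _ _).mpr hyo) hyr

lemma invd_root : INVD φ t t ∅ :=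
  ⟨IsSubtree.refl t, fun x h => absurd h.1 (Finset.notMem_empty _),
   by simp [doms], by simp [doms], fun y _ _ => rfl⟩

end Main

/-! ### Generic conversion of a finite-state branching program to `HasRR` form -/

inductive GPath {σ : Type} (f : σ → (ℕ × σ × σ) ⊕ Clause) : σ → List Lit → σ → Prop
  | nil (i : σ) : GPath f i [] i
  | cons {i : σ} {x : ℕ} {i₀ i₁ : σ} {b : Bool} {L : List Lit} {j : σ}
      (h : f i = Sum.inl (x, i₀, i₁)) (hp : GPath f (bif b then i₁ else i₀) L j) :
      GPath f i ((x, b) :: L) j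

lemma convert {φ : CNF} {σ : Type} [Fintype σ] (f' : σ → (ℕ × σ × σ) ⊕ Clause) (s' : σ)
    (rk : σ → ℕ)
    (hrk : ∀ a x b c, f' a = Sum.inl (x, b, c) → rk b < rk a ∧ rk c < rk a)
    (hreg : ∀ a L b, GPath f' a L b → (L.map Prod.fst).Nodup)
    (hsnd : ∀ L b C, GPath f' s' L b → f' b = Sum.inr C → C ∈ φ ∧ ∀ l ∈ C, (l.1, !l.2) ∈ L) :
    ∃ (f : Fin (Fintype.card σ) → (ℕ × Fin (Fintype.card σ) × Fin (Fintype.card σ)) ⊕ Clause)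
      (st : Fin (Fintype.card σ)),
    (∀ i x i₀ i₁, f i = Sum.inl (x, i₀, i₁) → i < i₀ ∧ i < i₁) ∧
    (∀ i L j, RPath f i L j → (L.map Prod.fst).Nodup) ∧
    (∀ L j C, RPath f st L j → f j = Sum.inr C → C ∈ φ ∧ ∀ l ∈ C, (l.1, !l.2) ∈ L) := by
  classical
  set N := Fintype.card σ with hN
  have hNpos : 0 < N := Fintype.card_pos_iff.mpr ⟨s'⟩
  set g : σ ≃ Fin N := Fintype.equivFin σ with hg
  set M : ℕ := Finset.univ.sup rk with hM
  have hrkle : ∀ a : σ, rk a ≤ M := fun a => Finset.le_sup (Finset.mem_univ a)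
  set key : σ → ℕ := fun a => (g a : ℕ) + (M - rk a) * N with hkey
  have hkeylt : ∀ a b : σ, rk b < rk a → key a < key b := by
    intro a b h
    have h1 : M - rk a < M - rk b := by
      have := hrkle a; omega
    have h2 : (g a : ℕ) < N := (g a).isLt
    calc (g a : ℕ) + (M - rk a) * N < N + (M - rk a) * N := by omega
    _ = (M - rk a + 1) * N := by ring
    _ ≤ (M - rk b) * N := Nat.mul_le_mul_right N (by omega)
    _ ≤ (g b : ℕ) + (M - rk b) * N := by omega
  have hkeyinj : Function.Injective key := by
    intro a b hab
    have ha : key a % N = (g a : ℕ) := by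
      simp only [hkey, Nat.add_mul_mod_self_right]
      exact Nat.mod_eq_of_lt (g a).isLt
    have hb : key b % N = (g b : ℕ) := by
      simp only [hkey, Nat.add_mul_mod_self_right]
      exact Nat.mod_eq_of_lt (g b).isLt
    have : (g a : ℕ) = (g b : ℕ) := by rw [← ha, ← hb, hab]
    exact g.injective (Fin.ext this)
  set T : Finset ℕ := Finset.univ.image key with hT
  have hTcard : T.card = N := by
    rw [hT, Finset.card_image_of_injective _ hkeyinj, Finset.card_univ]
  set iso := T.orderIsoOfFin hTcard with hiso
  set e : σ → Fin N := fun a => iso.symm ⟨key a, by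
    simp only [hT, Finset.mem_image]; exact ⟨a, Finset.mem_univ a, rfl⟩⟩ with he
  have helt : ∀ a b : σ, key a < key b → e a < e b := by
    intro a b h
    exact iso.symm.lt_iff_lt.mpr (Subtype.mk_lt_mk.mpr h)
  have heinj : Function.Injective e := by
    intro a b hab
    apply hkeyinj
    have := iso.symm.injective hab
    exact congrArg Subtype.val this
  have hbij : Function.Bijective e := by
    rw [Fintype.bijective_iff_injective_and_card]
    exact ⟨heinj, by simp [hN, Fintype.card_fin]⟩
  set dd := (Equiv.ofBijective e hbij).symm with hdd
  have hde : ∀ a : σ, dd (e a) = a := fun a => (Equiv.ofBijective e hbij).symm_apply_apply a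
  have hed : ∀ i : Fin N, e (dd i) = i := fun i => (Equiv.ofBijective e hbij).apply_symm_apply i
  set f : Fin N → (ℕ × Fin N × Fin N) ⊕ Clause := fun i =>
    match f' (dd i) with
    | Sum.inl (x, b, c) => Sum.inl (x, e b, e c)
    | Sum.inr C => Sum.inr C
    with hf
  have hfinl : ∀ i x i₀ i₁, f i = Sum.inl (x, i₀, i₁) →
      ∃ b c, f' (dd i) = Sum.inl (x, b, c) ∧ e b = i₀ ∧ e c = i₁ := by
    intro i x i₀ i₁ hfi
    simp only [hf] at hfi
    rcases hcase : f' (dd i) with p | C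
    · obtain ⟨x', b, c⟩ := p
      rw [hcase] at hfi
      simp only [Sum.inl.injEq, Prod.mk.injEq] at hfi
      obtain ⟨rfl, rfl, rfl⟩ := hfi
      exact ⟨b, c, rfl, rfl, rfl⟩
    · rw [hcase] at hfi; simp at hfi
  have hback : ∀ (i : Fin N) (L : List Lit) (j : Fin N), RPath f i L j →
      GPath f' (dd i) L (dd j) := by
    intro i L j hp
    induction hp with
    | nil i => exact GPath.nil _
    | @cons i x i₀ i₁ b L j h hp ih =>
        obtain ⟨b', c', hcase, hb, hc⟩ := hfinl i x i₀ i₁ h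
        refine GPath.cons hcase ?_
        have : dd (bif b then i₁ else i₀) = bif b then c' else b' := by
          cases b
          · simp only [cond_false]; rw [← hb, hde]
          · simp only [cond_true]; rw [← hc, hde]
        rwa [this] at ih
  refine ⟨f, e s', ?_, ?_, ?_⟩
  · intro i x i₀ i₁ hfi
    obtain ⟨b, c, hcase, hb, hc⟩ := hfinl i x i₀ i₁ hfi
    obtain ⟨h1, h2⟩ := hrk (dd i) x b c hcase
    constructor
    · rw [← hb, ← hed i]; exact helt _ _ (hkeylt _ _ h1)
    · rw [← hc, ← hed i]; exact helt _ _ (hkeylt _ _ h2)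
  · intro i L j hp
    exact hreg _ _ _ (hback i L j hp)
  · intro L j C hp hfj
    have hgp := hback _ L j hp
    rw [hde] at hgp
    refine hsnd L (dd j) C hgp ?_
    simp only [hf] at hfj
    rcases hcase : f' (dd j) with p | C'
    · obtain ⟨x', b, c⟩ := p
      rw [hcase] at hfj
      simp at hfj
    · rw [hcase] at hfj
      simpa using hfj

/-! ### The branching program associated with a tree decomposition -/

abbrev QT (φ : CNF) (t : Tree (Finset ℕ)) : Type := {q : ℕ × Finset Lit // q ∈ Q φ t}

abbrev StT (φ : CNF) (t : Tree (Finset ℕ)) : Type := (QT φ t ⊕ (QT φ t × Bool)) ⊕ Unit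

section Machine

variable (φ : CNF) (t : Tree (Finset ℕ))

noncomputable def dstep (q : ℕ × Finset Lit) (b : Bool) : (ℕ × Finset Lit) ⊕ Clause :=
  descend φ (topOcc q.1 t) (insert (q.1, b) q.2)

noncomputable def tgt (q : QT φ t) (b : Bool) : StT φ t :=
  match dstep φ t q.1 b with
  | Sum.inl q' => if hq : q' ∈ Q φ t then Sum.inl (Sum.inl ⟨q', hq⟩) else Sum.inr ()
  | Sum.inr _ => Sum.inl (Sum.inr (q, b))

noncomputable def transF : StT φ t → (ℕ × StT φ t × StT φ t) ⊕ Clause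
  | Sum.inl (Sum.inl q) => Sum.inl (q.1.1, tgt φ t q false, tgt φ t q true)
  | Sum.inl (Sum.inr (q, b)) =>
      Sum.inr (match dstep φ t q.1 b with
               | Sum.inr C => C
               | Sum.inl _ => (∅ : Clause))
  | Sum.inr _ => Sum.inr (match descend φ t ∅ with
               | Sum.inr C => C
               | Sum.inl _ => (∅ : Clause))

noncomputable def FutS : StT φ t → Finset ℕ
  | Sum.inl (Sum.inl q) => occv φ (topOcc q.1.1 t) \ doms q.1.2
  | _ => ∅

noncomputable def srcS : StT φ t :=
  match descend φ t ∅ with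
  | Sum.inl q' => if hq : q' ∈ Q φ t then Sum.inl (Sum.inl ⟨q', hq⟩) else Sum.inr ()
  | Sum.inr _ => Sum.inr ()

end Machine

section MachineLemmas

variable {φ : CNF} {t : Tree (Finset ℕ)}

lemma tgt_eq_inl {q : QT φ t} {b : Bool} {q' : ℕ × Finset Lit}
    (hds : dstep φ t q.1 b = Sum.inl q') (hq : q' ∈ Q φ t) :
    tgt φ t q b = Sum.inl (Sum.inl ⟨q', hq⟩) := by
  unfold tgt; rw [hds]; exact dif_pos hq

lemma tgt_eq_inr {q : QT φ t} {b : Bool} {C : Clause}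
    (hds : dstep φ t q.1 b = Sum.inr C) :
    tgt φ t q b = Sum.inl (Sum.inr (q, b)) := by
  unfold tgt; rw [hds]

lemma transF_sink_eq {q : QT φ t} {b : Bool} {C : Clause}
    (hds : dstep φ t q.1 b = Sum.inr C) :
    transF φ t (Sum.inl (Sum.inr (q, b))) = Sum.inr C := by
  have he : transF φ t (Sum.inl (Sum.inr (q, b))) =
      Sum.inr (match dstep φ t q.1 b with
               | Sum.inr C => C
               | Sum.inl _ => (∅ : Clause)) := rfl
  rw [he, hds]

lemma transF_unit_eq {C : Clause} (hds : descend φ t ∅ = Sum.inr C) :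
    transF φ t (Sum.inr ()) = Sum.inr C := by
  have he : transF φ t (Sum.inr ()) =
      Sum.inr (match descend φ t ∅ with
               | Sum.inr C => C
               | Sum.inl _ => (∅ : Clause)) := rfl
  rw [he, hds]

variable (hocc : ∀ x ∈ varsCNF φ, occursV x t) (hconn : ∀ x, ConnIn x t)
variable (hpair : ∀ C ∈ φ, ∀ x ∈ varsC C, ∀ y ∈ varsC C, ∃ B ∈ postorder t, x ∈ B ∧ y ∈ B)

include hocc hconn hpair

lemma step_lemma (i : StT φ t) (x : ℕ) (i₀ i₁ : StT φ t)
    (h : transF φ t i = Sum.inl (x, i₀, i₁)) :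
    x ∈ FutS φ t i ∧ FutS φ t i₀ ⊆ (FutS φ t i).erase x ∧ FutS φ t i₁ ⊆ (FutS φ t i).erase x := by
  match i with
  | Sum.inl (Sum.inr p) =>
      exfalso
      obtain ⟨q, b⟩ := p
      simp [transF] at h
  | Sum.inr u =>
      exfalso
      simp [transF] at h
  | Sum.inl (Sum.inl q) =>
    simp only [transF, Sum.inl.injEq, Prod.mk.injEq] at h
    obtain ⟨rfl, rfl, rfl⟩ := h
    obtain ⟨hx_cnf, hdom, hwf⟩ := mem_Q_iff.mp q.2
    obtain ⟨hx_root, hsub⟩ := topOcc_spec (hocc _ hx_cnf)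
    have hx_nd : q.1.1 ∉ doms q.1.2 := fun h => x_not_mem_Dx (hdom ▸ h)
    have hxF : q.1.1 ∈ FutS φ t (Sum.inl (Sum.inl q)) := by
      simp only [FutS]
      exact Finset.mem_sdiff.mpr
        ⟨Finset.mem_inter.mpr ⟨rootBag_subset_occF _ hx_root, hx_cnf⟩, hx_nd⟩
    have hb : ∀ b : Bool, FutS φ t (tgt φ t q b) ⊆
        (FutS φ t (Sum.inl (Sum.inl q))).erase q.1.1 := by
      intro b
      have inv := invd_init hocc hconn q.2 b
      obtain ⟨spec1, _⟩ := descend_spec hconn hpair (topOcc q.1.1 t)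
        (insert (q.1.1, b) q.1.2) inv
      rcases hds : dstep φ t q.1 b with q' | C
      · have hds' : descend φ (topOcc q.1.1 t) (insert (q.1.1, b) q.1.2) =
            Sum.inl (q'.1, q'.2) := hds
        obtain ⟨hsub', hQm, _, hfut, _⟩ := spec1 q'.1 q'.2 hds'
        rw [tgt_eq_inl hds hQm]
        simp only [FutS]
        intro v hv
        have hv' := hfut hv
        obtain ⟨hv1, hv2⟩ := Finset.mem_sdiff.mp hv'
        rw [doms_insert] at hv2
        exact Finset.mem_erase.mpr ⟨fun hvx => hv2 (hvx ▸ Finset.mem_insert_self _ _),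
          Finset.mem_sdiff.mpr ⟨hv1, fun hvd => hv2 (Finset.mem_insert_of_mem hvd)⟩⟩
      · rw [tgt_eq_inr hds]
        simp only [FutS]
        exact Finset.empty_subset _
    exact ⟨hxF, hb false, hb true⟩


lemma greg_aux : ∀ (i : StT φ t) (L : List Lit) (j : StT φ t), GPath (transF φ t) i L j →
    (∀ v ∈ L.map Prod.fst, v ∈ FutS φ t i) ∧ (L.map Prod.fst).Nodup := by
  intro i L j hp
  induction hp with
  | nil => simp
  | @cons i x i₀ i₁ b L j h hp ih =>
      obtain ⟨hx, h0, h1⟩ := step_lemma hocc hconn hpair i x i₀ i₁ h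
      have hsubb : FutS φ t (bif b then i₁ else i₀) ⊆ (FutS φ t i).erase x := by
        cases b
        · exact h0
        · exact h1
      constructor
      · intro v hv
        simp only [List.map_cons, List.mem_cons] at hv
        rcases hv with rfl | hv
        · exact hx
        · exact Finset.mem_of_mem_erase (hsubb (ih.1 v hv))
      · simp only [List.map_cons, List.nodup_cons]
        refine ⟨fun hmem => ?_, ih.2⟩
        exact (Finset.mem_erase.mp (hsubb (ih.1 x hmem))).1 rfl

lemma rank_lemma : ∀ (i : StT φ t) (x : ℕ) (i₀ i₁ : StT φ t),
    transF φ t i = Sum.inl (x, i₀, i₁) →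
    (FutS φ t i₀).card < (FutS φ t i).card ∧ (FutS φ t i₁).card < (FutS φ t i).card := by
  intro i x i₀ i₁ h
  obtain ⟨hx, h0, h1⟩ := step_lemma hocc hconn hpair i x i₀ i₁ h
  have hgen : ∀ jj : StT φ t, FutS φ t jj ⊆ (FutS φ t i).erase x →
      (FutS φ t jj).card < (FutS φ t i).card := by
    intro jj hsub
    calc (FutS φ t jj).card ≤ ((FutS φ t i).erase x).card := Finset.card_le_card hsub
    _ < (FutS φ t i).card := by
        rw [Finset.card_erase_of_mem hx]
        have := Finset.card_pos.mpr ⟨x, hx⟩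
        omega
  exact ⟨hgen i₀ h0, hgen i₁ h1⟩

end MachineLemmas

section Soundness

variable {φ : CNF} {t : Tree (Finset ℕ)}

lemma unsat_insert {s : Tree (Finset ℕ)} {γ : Finset Lit} {x : ℕ} {b : Bool}
    (hU : UnsatBelow φ s γ) : UnsatBelow φ s (insert (x, b) γ) := by
  rintro ⟨a, hext, hsat⟩
  refine hU ⟨a, fun p hp => hext p (Finset.mem_insert_of_mem hp), fun C hC hsub => ?_⟩
  refine hsat C hC (hsub.trans ?_)
  rw [doms_insert]
  exact Finset.union_subset_union (Finset.Subset.refl _) (Finset.subset_insert _ _)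

def GoodS (φ : CNF) (t : Tree (Finset ℕ)) (S : Finset Lit) : StT φ t → Prop
  | Sum.inl (Sum.inl q) => UnsatBelow φ (topOcc q.1.1 t) q.1.2 ∧ q.1.2 ⊆ S
  | i => ∀ C, transF φ t i = Sum.inr C → C ∈ φ ∧ ∀ p ∈ C, (p.1, !p.2) ∈ S

variable (hocc : ∀ x ∈ varsCNF φ, occursV x t) (hconn : ∀ x, ConnIn x t)
variable (hpair : ∀ C ∈ φ, ∀ x ∈ varsC C, ∀ y ∈ varsC C, ∃ B ∈ postorder t, x ∈ B ∧ y ∈ B)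

include hocc hconn hpair

lemma gsound : ∀ (i : StT φ t) (L : List Lit) (j : StT φ t), GPath (transF φ t) i L j →
    ∀ S : Finset Lit, GoodS φ t S i →
    ∀ C, transF φ t j = Sum.inr C →
      C ∈ φ ∧ ∀ p ∈ C, ((p.1, !p.2) ∈ S ∨ (p.1, !p.2) ∈ L) := by
  intro i L j hp
  induction hp with
  | nil i =>
      intro S hg C hC
      match i with
      | Sum.inl (Sum.inl q) => simp [transF] at hC
      | Sum.inl (Sum.inr p) =>
          obtain ⟨h1, h2⟩ := hg C hC
          exact ⟨h1, fun p hp => Or.inl (h2 p hp)⟩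
      | Sum.inr u =>
          obtain ⟨h1, h2⟩ := hg C hC
          exact ⟨h1, fun p hp => Or.inl (h2 p hp)⟩
  | @cons i x i₀ i₁ b L j h hp ih =>
      intro S hg C hC
      match i with
      | Sum.inl (Sum.inr p) => simp [transF] at h
      | Sum.inr u => simp [transF] at h
      | Sum.inl (Sum.inl q) =>
        simp only [transF, Sum.inl.injEq, Prod.mk.injEq] at h
        obtain ⟨rfl, rfl, rfl⟩ := h
        obtain ⟨hU, hS⟩ := hg
        have hUb : UnsatBelow φ (topOcc q.1.1 t) (insert (q.1.1, b) q.1.2) := unsat_insert hU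
        have inv := invd_init hocc hconn q.2 b
        obtain ⟨spec1, spec2⟩ := descend_spec hconn hpair (topOcc q.1.1 t)
          (insert (q.1.1, b) q.1.2) inv
        have hgood : GoodS φ t (insert (q.1.1, b) S) (tgt φ t q b) := by
          rcases hds : dstep φ t q.1 b with q' | C0
          · have hds' : descend φ (topOcc q.1.1 t) (insert (q.1.1, b) q.1.2) =
                Sum.inl (q'.1, q'.2) := hds
            obtain ⟨hsub', hQm, _, _, hUn⟩ := spec1 q'.1 q'.2 hds'
            rw [tgt_eq_inl hds hQm]
            exact ⟨hUn hUb, hsub'.trans ((Finset.insert_subset_insert _ hS).trans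
              (Finset.Subset.refl _))⟩
          · rw [tgt_eq_inr hds]
            intro C' hC'
            rw [transF_sink_eq hds] at hC'
            have hCC : C0 = C' := by injection hC'
            subst hCC
            have hds2 : descend φ (topOcc q.1.1 t) (insert (q.1.1, b) q.1.2) =
                Sum.inr C0 := hds
            obtain ⟨hc1, hc2⟩ := spec2 C0 hds2 hUb
            exact ⟨hc1, fun p hp => Finset.insert_subset_insert _ hS (hc2 p hp)⟩
        have hbif : (bif b then tgt φ t q true else tgt φ t q false) = tgt φ t q b := by
          cases b <;> rfl
        rw [hbif] at ih
        obtain ⟨hc1, hc2⟩ := ih (insert (q.1.1, b) S) hgood C hC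
        refine ⟨hc1, fun p hp => ?_⟩
        rcases hc2 p hp with hin | hin
        · rcases Finset.mem_insert.mp hin with heq | hin'
          · exact Or.inr (by rw [heq]; exact List.mem_cons_self)
          · exact Or.inl hin'
        · exact Or.inr (List.mem_cons_of_mem _ hin)

lemma unsat_root (hU : UnsatCNF φ) : UnsatBelow φ t ∅ := by
  rintro ⟨a, _, hsat⟩
  refine hU ⟨a, fun C hC => hsat C hC ?_⟩
  intro v hv
  refine Finset.mem_union.mpr (Or.inl ?_)
  exact (occursV_iff_occF v t).mp (hocc v (varsC_subset_varsCNF hC hv))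

lemma good_src (hU : UnsatCNF φ) : GoodS φ t ∅ (srcS φ t) := by
  have hUr : UnsatBelow φ t ∅ := unsat_root hocc hconn hpair hU
  obtain ⟨spec1, spec2⟩ := descend_spec hconn hpair t ∅ invd_root
  rcases hds : descend φ t ∅ with q' | C0
  · have hds' : descend φ t ∅ = Sum.inl (q'.1, q'.2) := hds
    obtain ⟨hsub', hQm, _, _, hUn⟩ := spec1 q'.1 q'.2 hds'
    have hsrc : srcS φ t = Sum.inl (Sum.inl ⟨q', hQm⟩) := by
      unfold srcS; rw [hds]; exact dif_pos hQm
    rw [hsrc]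
    refine ⟨hUn hUr, ?_⟩
    intro p hp
    exact absurd (hsub' hp) (Finset.notMem_empty p)
  · have hsrc : srcS φ t = Sum.inr () := by
      unfold srcS; rw [hds]
    rw [hsrc]
    intro C hC
    rw [transF_unit_eq hds] at hC
    have hCC : C0 = C := by injection hC
    subst hCC
    obtain ⟨hc1, hc2⟩ := spec2 C0 hds hUr
    exact ⟨hc1, hc2⟩

end Soundness

section Count

variable {φ : CNF} {t : Tree (Finset ℕ)} {k : ℕ}

lemma card_Dx_le (hocc : ∀ x ∈ varsCNF φ, occursV x t)
    (hcard : ∀ B ∈ postorder t, B.card ≤ k + 1) {x : ℕ} (hx : x ∈ varsCNF φ) :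
    (Dx φ t x).card ≤ k := by
  obtain ⟨hx_root, hsub⟩ := topOcc_spec (hocc x hx)
  have hne : topOcc x t ≠ Tree.nil := by
    intro h; rw [h] at hx_root; simp [rootBag] at hx_root
  have hb := hcard _ (rootBag_mem_postorder hsub hne)
  have hsubD : Dx φ t x ⊆ (rootBag (topOcc x t)).erase x := by
    intro z hz
    simp only [Dx, Finset.mem_filter] at hz
    refine Finset.mem_erase.mpr ⟨?_, (Finset.mem_inter.mp hz.1).1⟩
    rintro rfl
    rcases hz.2 with h | h
    · exact h rfl
    · omega
  calc (Dx φ t x).card ≤ ((rootBag (topOcc x t)).erase x).card := Finset.card_le_card hsubD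
  _ = (rootBag (topOcc x t)).card - 1 := Finset.card_erase_of_mem hx_root
  _ ≤ k := by omega

lemma card_Q_le (hocc : ∀ x ∈ varsCNF φ, occursV x t)
    (hcard : ∀ B ∈ postorder t, B.card ≤ k + 1) :
    (Q φ t).card ≤ (varsCNF φ).card * 2 ^ k := by
  calc (Q φ t).card ≤ ∑ x ∈ varsCNF φ,
      ((Dx φ t x).powerset.image (fun P => (x, code (Dx φ t x) P))).card :=
        Finset.card_biUnion_le
  _ ≤ ∑ _x ∈ varsCNF φ, 2 ^ k := by
      refine Finset.sum_le_sum (fun x hx => ?_)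
      calc ((Dx φ t x).powerset.image (fun P => (x, code (Dx φ t x) P))).card
          ≤ (Dx φ t x).powerset.card := Finset.card_image_le
      _ = 2 ^ (Dx φ t x).card := Finset.card_powerset _
      _ ≤ 2 ^ k := Nat.pow_le_pow_right (by norm_num) (card_Dx_le hocc hcard hx)
  _ = (varsCNF φ).card * 2 ^ k := by rw [Finset.sum_const, smul_eq_mul]

lemma card_StT : Fintype.card (StT φ t) = 3 * (Q φ t).card + 1 := by
  simp only [StT, QT, Fintype.card_sum, Fintype.card_prod, Fintype.card_bool,
    Fintype.card_unit, Fintype.card_coe]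
  ring

end Count

end RRAux

theorem stmt15 :
    ∃ c : ℕ, ∀ (φ : CNF) (k : ℕ) (t : Tree (Finset ℕ)),
      (∀ x ∈ varsCNF φ, occursV x t) →
      (∀ C ∈ φ, ∀ x ∈ varsC C, ∀ y ∈ varsC C, ∃ B ∈ postorder t, x ∈ B ∧ y ∈ B) →
      (∀ x : ℕ, ConnIn x t) →
      (∀ B ∈ postorder t, B.card ≤ k + 1) →
      UnsatCNF φ →
      HasRR φ (c * 2 ^ k * ((varsCNF φ).card + 1)) := by
  refine ⟨4, ?_⟩
  intro φ k t hocc hpair hconn hcard hU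
  have hrk : ∀ (a : StT φ t) (x : ℕ) (b c : StT φ t), transF φ t a = Sum.inl (x, b, c) →
      (FutS φ t b).card < (FutS φ t a).card ∧ (FutS φ t c).card < (FutS φ t a).card :=
    fun a x b c h => rank_lemma hocc hconn hpair a x b c h
  obtain ⟨f, st, hord, hreg, hsnd⟩ := convert (φ := φ) (transF φ t) (srcS φ t)
      (fun i => (FutS φ t i).card) hrk
      (fun a L b hp => (greg_aux hocc hconn hpair a L b hp).2)
      (fun L b C hp hfb => by
         have h := gsound hocc hconn hpair _ L b hp ∅ (good_src hocc hconn hpair hU) C hfb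
         exact ⟨h.1, fun p hp' => (h.2 p hp').resolve_left
           (fun hh => absurd hh (Finset.notMem_empty _))⟩)
  refine ⟨Fintype.card (StT φ t), f, st, ?_, hord, hreg, hsnd⟩
  have h1 := card_Q_le hocc hcard
  have h2 : (1:ℕ) ≤ 2 ^ k := Nat.one_le_two_pow
  rw [card_StT]
  nlinarith [h1, h2]
end
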